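/- arXiv:1109.4190 — 4 statements merged into one kernel-verified Lean document; each statement's English description precedes it below -/
import Mathlib

section
/- Assume n ≥ 2. Suppose ã_1, …, ã_n ∈ K are such that the matrix A′, obtained from A by replacing its last column with (ã_1, …, ã_n)ᵗ, satisfies det(A′; {k,…,n}, {k,…,n}) = (−1)^{n−k} · a_{k,n} · det(A; {k+1,…,n}, {k,…,n−1}) for every 1 ≤ k ≤ n. Then for every 1 ≤ i ≤ n−1 one has det(A′; {i} ∪ {i+2,…,n}, {i+1,…,n}) / det(A′; {i+1,…,n}, {i+1,…,n}) = a_{i,n} / a_{i+1,n} + det(A; {i} ∪ {i+2,…,n}, {i,…,n−1}) / det(A; {i+1,…,n}, {i,…,n−1}); all denominators appearing here are nonzero elements of K. -/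
/-- The field of fractions of `ℚ[a_{i,j} : i,j ∈ Fin n]`. -/
abbrev GenField (n : ℕ) : Type := FractionRing (MvPolynomial (Fin n × Fin n) ℚ)

/-- The generic `n × n` matrix, whose `(i,j)` entry is the indeterminate `a_{i,j}`. -/
noncomputable def genMat (n : ℕ) : Matrix (Fin n) (Fin n) (GenField n) :=
  fun i j => algebraMap (MvPolynomial (Fin n × Fin n) ℚ) (GenField n) (MvPolynomial.X (i, j))

/-- The determinant of the square submatrix of `M` with rows `R` and columns `C`
(each taken in increasing order); defined to be `0` if `R` and `C` have different
cardinalities.  The determinant of the empty submatrix is `1`. -/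
noncomputable def minorDet {K : Type*} [CommRing K] {n : ℕ} (M : Matrix (Fin n) (Fin n) K)
    (R C : Finset (Fin n)) : K :=
  if h : R.card = C.card then
    (M.submatrix (fun i => R.orderEmbOfFin rfl i) (fun i => C.orderEmbOfFin h.symm i)).det
  else 0

section Aux

open Matrix Finset

lemma det_one_updateColumn {K : Type*} [CommRing K] {ι : Type*} [DecidableEq ι] [Fintype ι]
    (c : ι) (v : ι → K) : ((1 : Matrix ι ι K).updateCol c v).det = v c := by
  rw [← Matrix.cramer_apply, Matrix.cramer_one]; rfl

lemma sub_upd {K : Type*} [CommRing K] {m : ℕ} (B : Matrix (Fin (m+2)) (Fin (m+2)) K)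
    (u w : Fin (m+2) → K) (f : Fin (m+1) → Fin (m+2)) :
    (((B.updateCol 0 u).updateCol (Fin.last (m+1)) w).submatrix f Fin.succ) =
      ((B.submatrix f Fin.succ).updateCol (Fin.last m) (w ∘ f)) := by
  ext r c
  have h : (Fin.succ c = Fin.last (m+1)) ↔ (c = Fin.last m) := by
    rw [← Fin.succ_last]; exact Fin.succ_inj
  simp only [Matrix.submatrix_apply, Matrix.updateCol_apply, h, Fin.succ_ne_zero, if_false,
    Function.comp]

lemma minorDet_eq_det {K : Type*} [CommRing K] {n d : ℕ} (M : Matrix (Fin n) (Fin n) K)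
    (R C : Finset (Fin n)) (f g : Fin d → Fin n) (hf : StrictMono f) (hg : StrictMono g)
    (hfR : ∀ y, y ∈ R ↔ ∃ x, f x = y) (hgC : ∀ y, y ∈ C ↔ ∃ x, g x = y) :
    minorDet M R C = (M.submatrix f g).det := by
  have hR : R = Finset.image f Finset.univ := by
    ext y; simp only [Finset.mem_image, Finset.mem_univ, true_and]; rw [hfR]
  have hC : C = Finset.image g Finset.univ := by
    ext y; simp only [Finset.mem_image, Finset.mem_univ, true_and]; rw [hgC]
  have hRc : R.card = d := by
    rw [hR, Finset.card_image_of_injective _ hf.injective, Finset.card_univ, Fintype.card_fin]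
  have hCc : C.card = d := by
    rw [hC, Finset.card_image_of_injective _ hg.injective, Finset.card_univ, Fintype.card_fin]
  subst hRc
  have h : R.card = C.card := hCc.symm
  unfold minorDet
  rw [dif_pos h]
  have e1 : f = fun x => R.orderEmbOfFin rfl x :=
    Finset.orderEmbOfFin_unique rfl (fun x => (hfR (f x)).2 ⟨x, rfl⟩) hf
  have e2 : g = fun x => C.orderEmbOfFin h.symm x :=
    Finset.orderEmbOfFin_unique h.symm (fun x => (hgC (g x)).2 ⟨x, rfl⟩) hg
  rw [← e1, ← e2]

lemma genDet_ne_zero {n d : ℕ} (f g : Fin d → Fin n)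
    (hfg : ∀ r c, ((f r : ℕ) = (g c : ℕ) + 1 ↔ r = c)) :
    ((genMat n).submatrix f g).det ≠ 0 := by
  set φ := algebraMap (MvPolynomial (Fin n × Fin n) ℚ) (GenField n) with hφdef
  have hφ : Function.Injective φ := IsFractionRing.injective _ _
  set P : Matrix (Fin d) (Fin d) (MvPolynomial (Fin n × Fin n) ℚ) :=
    fun r c => MvPolynomial.X (f r, g c) with hP
  have h1 : (genMat n).submatrix f g = P.map φ := by
    ext r c; rfl
  rw [h1, ← RingHom.mapMatrix_apply, ← RingHom.map_det]
  intro h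
  have hPdet : P.det = 0 := hφ (by rw [h, map_zero])
  set ev : MvPolynomial (Fin n × Fin n) ℚ →+* ℚ :=
    MvPolynomial.eval (fun p : Fin n × Fin n => if (p.1 : ℕ) = (p.2 : ℕ) + 1 then (1:ℚ) else 0)
    with hev
  have h2 : ev P.det = 0 := by rw [hPdet, map_zero]
  rw [RingHom.map_det, RingHom.mapMatrix_apply] at h2
  have h3 : P.map ev = (1 : Matrix (Fin d) (Fin d) ℚ) := by
    ext r c
    rw [Matrix.map_apply, hP, hev]
    rw [MvPolynomial.eval_X]
    rw [Matrix.one_apply]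
    exact if_congr (hfg r c) rfl rfl
  rw [h3, Matrix.det_one] at h2
  exact one_ne_zero h2

lemma desnanot_jacobi {K : Type*} [Field K] {m : ℕ} (M : Matrix (Fin (m+2)) (Fin (m+2)) K)
    (hd : M.det ≠ 0) :
    M.det * (M.submatrix (fun k : Fin m => k.succ.succ) (fun k : Fin m => k.castSucc.succ)).det =
      (M.submatrix (Fin.succAbove 0) (Fin.succAbove 0)).det *
        (M.submatrix (Fin.succAbove 1) (Fin.succAbove (Fin.last (m+1)))).det -
      (M.submatrix (Fin.succAbove 0) (Fin.succAbove (Fin.last (m+1)))).det *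
        (M.submatrix (Fin.succAbove 1) (Fin.succAbove 0)).det := by
  have hL0 : Fin.last (m+1) ≠ 0 := by simp [Fin.ext_iff]
  set d := M.det with hdd
  set u : Fin (m+2) → K := fun k => M.adjugate k 0 with hu
  set w : Fin (m+2) → K := fun k => M.adjugate k 1 with hw
  set V : Matrix (Fin (m+2)) (Fin (m+2)) K :=
    ((1 : Matrix (Fin (m+2)) (Fin (m+2)) K).updateCol 0 u).updateCol (Fin.last (m+1)) w
    with hV
  have hMV : M * V = ((M.updateCol 0 (fun k => if k = 0 then d else 0)).updateCol
      (Fin.last (m+1)) (fun k => if k = 1 then d else 0)) := by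
    ext r c
    rw [Matrix.mul_apply]
    by_cases hc : c = Fin.last (m+1)
    · subst hc
      have h1 : ∑ k, M r k * V k (Fin.last (m+1)) = (M * M.adjugate) r 1 := by
        rw [Matrix.mul_apply]
        refine Finset.sum_congr rfl fun k _ => ?_
        rw [hV, Matrix.updateCol_self]
      rw [h1, Matrix.mul_adjugate]
      simp [Matrix.one_apply, Matrix.updateCol_self, hdd]
    · by_cases hc0 : c = 0
      · subst hc0
        have h1 : ∑ k, M r k * V k 0 = (M * M.adjugate) r 0 := by
          rw [Matrix.mul_apply]
          refine Finset.sum_congr rfl fun k _ => ?_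
          rw [hV, Matrix.updateCol_ne hL0.symm, Matrix.updateCol_self]
        rw [h1, Matrix.mul_adjugate]
        rw [Matrix.updateCol_ne hL0.symm, Matrix.updateCol_self]
        simp [Matrix.one_apply, hdd]
      · have h1 : ∑ k, M r k * V k c = ∑ k, M r k * (1 : Matrix (Fin (m+2)) (Fin (m+2)) K) k c := by
          refine Finset.sum_congr rfl fun k _ => ?_
          rw [hV, Matrix.updateCol_ne hc, Matrix.updateCol_ne hc0]
        rw [h1, ← Matrix.mul_apply, Matrix.mul_one,
          Matrix.updateCol_ne hc, Matrix.updateCol_ne hc0]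
  -- determinant of M * V
  have hdetMV : (M * V).det =
      d * ((-1:K)^m * (d *
        (M.submatrix (fun k : Fin m => k.succ.succ) (fun k : Fin m => k.castSucc.succ)).det)) := by
    rw [hMV, Matrix.det_succ_column_zero]
    rw [Finset.sum_eq_single (0 : Fin (m+2))]
    rotate_left
    · intro b _ hb
      rw [Matrix.updateCol_ne hL0.symm, Matrix.updateCol_self, if_neg hb]
      ring
    · intro h; exact absurd (Finset.mem_univ _) h
    rw [Matrix.updateCol_ne hL0.symm, Matrix.updateCol_self, if_pos rfl]
    rw [sub_upd]
    have hq : ((fun k => if k = (1 : Fin (m+2)) then d else 0) ∘ Fin.succAbove (0 : Fin (m+2)))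
        = fun k : Fin (m+1) => if k = 0 then d else 0 := by
      funext k
      rw [Function.comp_apply, Fin.zero_succAbove]
      by_cases hk : k = 0
      · subst hk; rw [if_pos Fin.succ_zero_eq_one, if_pos rfl]
      · rw [if_neg, if_neg hk]
        rw [← Fin.succ_zero_eq_one, Fin.succ_inj]
        exact hk
    rw [hq, Matrix.det_succ_column _ (Fin.last m)]
    rw [Finset.sum_eq_single (0 : Fin (m+1))]
    rotate_left
    · intro b _ hb
      rw [Matrix.updateCol_self, if_neg hb]
      ring
    · intro h; exact absurd (Finset.mem_univ _) h
    rw [Matrix.updateCol_self, if_pos rfl, Matrix.submatrix_updateCol_succAbove,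
      Matrix.submatrix_submatrix]
    have hmat : M.submatrix
          ((Fin.succAbove (0 : Fin (m+2))) ∘ (Fin.succAbove (0 : Fin (m+1))))
          (Fin.succ ∘ (Fin.succAbove (Fin.last m))) =
        M.submatrix (fun k : Fin m => k.succ.succ) (fun k : Fin m => k.castSucc.succ) := by
      ext r c
      simp [Fin.zero_succAbove, Fin.succAbove_last]
    rw [hmat]
    simp only [Fin.val_zero, Fin.val_last, pow_zero, zero_add, one_mul]
    ring
  -- determinant of V
  have hdetV : V.det = u 0 * w (Fin.last (m+1)) - u (Fin.last (m+1)) * w 0 := by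
    rw [Matrix.det_succ_column_zero]
    have key : ∀ r : Fin (m+2),
        (-1:K)^(r:ℕ) * V r 0 * (V.submatrix r.succAbove Fin.succ).det =
        (if r = 0 then u 0 * w (Fin.last (m+1)) else 0)
          + (if r = Fin.last (m+1) then -(u (Fin.last (m+1)) * w 0) else 0) := by
      intro r
      have hV0 : V r 0 = u r := by
        rw [hV, Matrix.updateCol_ne hL0.symm, Matrix.updateCol_self]
      have hsub : V.submatrix r.succAbove Fin.succ =
          (((1 : Matrix (Fin (m+2)) (Fin (m+2)) K).submatrix r.succAbove Fin.succ)).updateCol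
            (Fin.last m) (w ∘ r.succAbove) := sub_upd _ _ _ _
      by_cases h0 : r = 0
      · subst h0
        rw [if_pos rfl, if_neg hL0.symm, add_zero, hV0, hsub]
        have hone : (1 : Matrix (Fin (m+2)) (Fin (m+2)) K).submatrix
            (Fin.succAbove (0 : Fin (m+2))) Fin.succ = 1 := by
          ext a b
          by_cases hab : a = b
          · subst hab; simp [Fin.zero_succAbove, Matrix.one_apply]
          · simp [Fin.zero_succAbove, Matrix.one_apply, Fin.succ_inj, hab]
        rw [hone, det_one_updateColumn]
        have : (w ∘ Fin.succAbove (0 : Fin (m+2))) (Fin.last m) = w (Fin.last (m+1)) := by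
          simp [Fin.zero_succAbove, Fin.succ_last]
        rw [this]
        simp
      · by_cases hlast : r = Fin.last (m+1)
        · subst hlast
          rw [if_neg h0, if_pos rfl, zero_add, hV0, hsub]
          rw [Matrix.det_succ_row_zero]
          rw [Finset.sum_eq_single (Fin.last m)]
          rotate_left
          · intro b _ hb
            have hz : (((1 : Matrix (Fin (m+2)) (Fin (m+2)) K).submatrix
                (Fin.succAbove (Fin.last (m+1))) Fin.succ).updateCol (Fin.last m)
                (w ∘ Fin.succAbove (Fin.last (m+1)))) 0 b = 0 := by
              rw [Matrix.updateCol_ne hb, Matrix.submatrix_apply]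
              refine Matrix.one_apply_ne ?_
              rw [Fin.succAbove_last]
              simpa using (Fin.succ_ne_zero b).symm
            rw [hz]; ring
          · intro h; exact absurd (Finset.mem_univ _) h
          rw [Matrix.updateCol_self]
          have hw0' : (w ∘ Fin.succAbove (Fin.last (m+1))) 0 = w 0 := by
            simp [Fin.succAbove_last]
          rw [hw0', Matrix.submatrix_updateCol_succAbove, Matrix.submatrix_submatrix]
          have hone : (1 : Matrix (Fin (m+2)) (Fin (m+2)) K).submatrix
              (Fin.succAbove (Fin.last (m+1)) ∘ Fin.succ)
              (Fin.succ ∘ Fin.succAbove (Fin.last m)) = 1 := by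
            ext a b
            rw [Matrix.submatrix_apply, Matrix.one_apply, Matrix.one_apply]
            have hiff : (Fin.succAbove (Fin.last (m+1)) ∘ Fin.succ) a
                = (Fin.succ ∘ Fin.succAbove (Fin.last m)) b ↔ a = b := by
              simp only [Function.comp, Fin.succAbove_last, Fin.ext_iff,
                Fin.coe_castSucc, Fin.val_succ]
              omega
            rw [if_congr hiff rfl rfl]
          rw [hone, Matrix.det_one]
          simp only [Fin.val_last, Fin.val_zero, zero_add, mul_one]
          have hodd : (-1:K)^(m+1) * (-1:K)^m = -1 := by
            rw [← pow_add]; exact Odd.neg_one_pow ⟨m, by omega⟩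
          linear_combination (u (Fin.last (m+1)) * w 0) * hodd
        · rw [if_neg h0, if_neg hlast, add_zero]
          have h1 : 1 ≤ (r:ℕ) := by
            rcases Nat.eq_zero_or_pos (r:ℕ) with h | h
            · exact absurd (Fin.ext h) h0
            · exact h
          have h2 : (r:ℕ) ≤ m := by
            have h3 := r.isLt
            have hne : (r:ℕ) ≠ m+1 := fun hh => hlast (Fin.ext (by simp [Fin.val_last, hh]))
            omega
          have hz : (V.submatrix r.succAbove Fin.succ).det = 0 := by
            rw [hsub]
            have hc0lt : (r:ℕ) - 1 < m + 1 := by omega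
            have hc0ne : (⟨(r:ℕ) - 1, hc0lt⟩ : Fin (m+1)) ≠ Fin.last m := by
              simp only [ne_eq, Fin.ext_iff, Fin.val_last]
              omega
            apply Matrix.det_eq_zero_of_column_eq_zero (⟨(r:ℕ) - 1, hc0lt⟩ : Fin (m+1))
            intro a
            rw [Matrix.updateCol_ne hc0ne, Matrix.submatrix_apply]
            refine Matrix.one_apply_ne ?_
            have hsc : Fin.succ (⟨(r:ℕ) - 1, hc0lt⟩ : Fin (m+1)) = r := by
              simp only [Fin.ext_iff, Fin.val_succ]
              omega
            rw [hsc]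
            exact Fin.succAbove_ne r a
          rw [hz]; ring
    rw [Finset.sum_congr rfl (fun r _ => key r), Finset.sum_add_distrib,
      Finset.sum_ite_eq' Finset.univ (0 : Fin (m+2)),
      Finset.sum_ite_eq' Finset.univ (Fin.last (m+1))]
    simp only [Finset.mem_univ, if_true]
    ring
  -- combine
  have hMVdet : (M * V).det = d * V.det := by rw [Matrix.det_mul]
  have E : u 0 * w (Fin.last (m+1)) - u (Fin.last (m+1)) * w 0 =
      (-1:K)^m * (d * (M.submatrix (fun k : Fin m => k.succ.succ)
        (fun k : Fin m => k.castSucc.succ)).det) :=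
    hdetV.symm.trans (mul_left_cancel₀ hd (hMVdet.symm.trans hdetMV))
  have hu0 : u 0 = (M.submatrix (Fin.succAbove 0) (Fin.succAbove 0)).det := by
    show M.adjugate 0 0 = _
    rw [Matrix.adjugate_fin_succ_eq_det_submatrix]
    simp
  have hwL : w (Fin.last (m+1)) = (-1:K)^m *
      (M.submatrix (Fin.succAbove 1) (Fin.succAbove (Fin.last (m+1)))).det := by
    show M.adjugate (Fin.last (m+1)) 1 = _
    rw [Matrix.adjugate_fin_succ_eq_det_submatrix]
    have h1 : ((1 : Fin (m+2)) : ℕ) + ((Fin.last (m+1)) : ℕ) = m + 2 := by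
      simp [Fin.val_last, Fin.val_one]; omega
    rw [h1]
    have h2 : (-1:K)^(m+2) = (-1:K)^m := by rw [pow_add]; simp
    rw [h2]
  have huL : u (Fin.last (m+1)) = (-1:K)^(m+1) *
      (M.submatrix (Fin.succAbove 0) (Fin.succAbove (Fin.last (m+1)))).det := by
    show M.adjugate (Fin.last (m+1)) 0 = _
    rw [Matrix.adjugate_fin_succ_eq_det_submatrix]
    congr 1
    simp [Fin.val_last]
  have hw0 : w 0 = -(M.submatrix (Fin.succAbove 1) (Fin.succAbove 0)).det := by
    show M.adjugate 0 1 = _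
    rw [Matrix.adjugate_fin_succ_eq_det_submatrix]
    simp [Fin.val_one]
  rw [hu0, hwL, huL, hw0] at E
  have hs : ((-1:K)^m) ≠ 0 := pow_ne_zero _ (by norm_num)
  refine mul_left_cancel₀ hs ?_
  linear_combination -E

/-- The strictly monotone enumeration of `{i, i+1, ..., i+m+1}` inside `Fin n`. -/
def eMap (n i m : ℕ) (h : i + m + 2 = n) : Fin (m+2) → Fin n :=
  fun k => ⟨i + k, by omega⟩

@[simp] lemma val_eMap (n i m : ℕ) (h : i + m + 2 = n) (k : Fin (m+2)) :
    ((eMap n i m h k) : ℕ) = i + (k : ℕ) := rfl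

end Aux

/-- Lemma on replacing the last column.  Let `A` be the generic `n × n`
matrix (`n ≥ 2`), and `A′` be `A` with last column replaced by `(ã_1,…,ã_n)ᵗ`, so that
`det(A′; {k,…,n}, {k,…,n}) = (−1)^{n−k} a_{k,n} det(A; {k+1,…,n}, {k,…,n−1})` for all
`k`.  Then for each `1 ≤ i ≤ n−1` (0-based: `(i:ℕ)+1 = (j:ℕ)`), all the indicated
denominators are nonzero, and
`det(A′; {i}∪{i+2,…,n},{i+1,…,n})/det(A′; {i+1,…,n},{i+1,…,n})
  = a_{i,n}/a_{i+1,n} + det(A; {i}∪{i+2,…,n},{i,…,n−1})/det(A; {i+1,…,n},{i,…,n−1})`. -/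
theorem superdiagonal_shift_of_last_column_replacement (n : ℕ) (hn : 2 ≤ n)
    (atil : Fin n → GenField n)
    (A' : Matrix (Fin n) (Fin n) (GenField n))
    (hA' : ∀ i j : Fin n, A' i j =
      if (j : ℕ) = n - 1 then atil i else genMat n i j)
    (hyp : ∀ k : Fin n,
      minorDet A' (Finset.Ici k) (Finset.Ici k) =
        (-1 : GenField n) ^ (n - 1 - (k : ℕ)) * genMat n k ⟨n - 1, by omega⟩ *
          minorDet (genMat n) (Finset.Ioi k) (Finset.Ico k ⟨n - 1, by omega⟩)) :
    ∀ i j : Fin n, (i : ℕ) + 1 = (j : ℕ) →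
      (minorDet A' (Finset.Ici j) (Finset.Ici j) ≠ 0 ∧
        genMat n j ⟨n - 1, by omega⟩ ≠ 0 ∧
        minorDet (genMat n) (Finset.Ioi i) (Finset.Ico i ⟨n - 1, by omega⟩) ≠ 0) ∧
      minorDet A' (insert i (Finset.Ioi j)) (Finset.Ici j) /
          minorDet A' (Finset.Ici j) (Finset.Ici j) =
        genMat n i ⟨n - 1, by omega⟩ / genMat n j ⟨n - 1, by omega⟩ +
          minorDet (genMat n) (insert i (Finset.Ioi j)) (Finset.Ico i ⟨n - 1, by omega⟩) /
            minorDet (genMat n) (Finset.Ioi i) (Finset.Ico i ⟨n - 1, by omega⟩) := by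
  intro i j hij
  have hjlt : (j : ℕ) < n := j.isLt
  obtain ⟨m, hm⟩ : ∃ m : ℕ, (i : ℕ) + m + 2 = n := ⟨n - 2 - (i : ℕ), by omega⟩
  -- value lemmas
  have v0 : ∀ k : Fin (m+1), ((Fin.succAbove (0 : Fin (m+2)) k) : ℕ) = (k : ℕ) + 1 := by
    intro k; rw [Fin.zero_succAbove, Fin.val_succ]
  have vL : ∀ k : Fin (m+1), ((Fin.succAbove (Fin.last (m+1)) k) : ℕ) = (k : ℕ) := by
    intro k; rw [Fin.succAbove_last]; exact Fin.coe_castSucc k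
  have v1 : ∀ k : Fin (m+1), ((Fin.succAbove (1 : Fin (m+2)) k) : ℕ)
      = if (k : ℕ) < 1 then (k : ℕ) else (k : ℕ) + 1 := by
    intro k
    by_cases hk : (k : ℕ) < 1
    · rw [if_pos hk, Fin.succAbove_of_castSucc_lt, Fin.coe_castSucc]
      rw [Fin.lt_def, Fin.coe_castSucc, Fin.val_one]; exact hk
    · rw [if_neg hk, Fin.succAbove_of_le_castSucc, Fin.val_succ]
      rw [Fin.le_def, Fin.coe_castSucc, Fin.val_one]; omega
  have v2 : ∀ k : Fin m, (((k : Fin m).succ.succ : Fin (m+2)) : ℕ) = (k : ℕ) + 2 := by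
    intro k; rw [Fin.val_succ, Fin.val_succ]
  have v3 : ∀ k : Fin m, (((k : Fin m).castSucc.succ : Fin (m+2)) : ℕ) = (k : ℕ) + 1 := by
    intro k; rw [Fin.val_succ, Fin.coe_castSucc]
  -- the six minorDet conversions
  have hF1 : minorDet A' (Finset.Ici i) (Finset.Ici i) = (A'.submatrix (eMap n i m hm)
      (eMap n i m hm)).det := by
    refine minorDet_eq_det A' _ _ _ _ ?_ ?_ ?_ ?_
    · intro a b hab; rw [Fin.lt_def] at hab ⊢; simp only [val_eMap]; omega
    · intro a b hab; rw [Fin.lt_def] at hab ⊢; simp only [val_eMap]; omega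
    all_goals {
      intro y
      have hy := y.isLt
      rw [Finset.mem_Ici, Fin.le_def]
      constructor
      · intro h
        exact ⟨⟨(y : ℕ) - (i : ℕ), by omega⟩, by
          rw [Fin.ext_iff]; show (i : ℕ) + ((y : ℕ) - (i : ℕ)) = (y : ℕ); omega⟩
      · rintro ⟨k, rfl⟩
        show (i : ℕ) ≤ (i : ℕ) + (k : ℕ)
        omega }
  have memIcij : ∀ y : Fin n, y ∈ Finset.Ici j ↔
      ∃ k : Fin (m+1), eMap n i m hm (Fin.succAbove 0 k) = y := by
    intro y
    have hy := y.isLt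
    rw [Finset.mem_Ici, Fin.le_def]
    constructor
    · intro h
      refine ⟨⟨(y : ℕ) - (i : ℕ) - 1, by omega⟩, ?_⟩
      rw [Fin.ext_iff, val_eMap, v0]
      show (i : ℕ) + ((y : ℕ) - (i : ℕ) - 1 + 1) = (y : ℕ)
      omega
    · rintro ⟨k, rfl⟩
      rw [val_eMap, v0]; omega
  have memIoii : ∀ y : Fin n, y ∈ Finset.Ioi i ↔
      ∃ k : Fin (m+1), eMap n i m hm (Fin.succAbove 0 k) = y := by
    intro y
    have hy := y.isLt
    rw [Finset.mem_Ioi, Fin.lt_def]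
    constructor
    · intro h
      refine ⟨⟨(y : ℕ) - (i : ℕ) - 1, by omega⟩, ?_⟩
      rw [Fin.ext_iff, val_eMap, v0]
      show (i : ℕ) + ((y : ℕ) - (i : ℕ) - 1 + 1) = (y : ℕ)
      omega
    · rintro ⟨k, rfl⟩
      rw [val_eMap, v0]; omega
  have memIns : ∀ y : Fin n, y ∈ insert i (Finset.Ioi j) ↔
      ∃ k : Fin (m+1), eMap n i m hm (Fin.succAbove 1 k) = y := by
    intro y
    have hy := y.isLt
    rw [Finset.mem_insert, Finset.mem_Ioi]
    constructor
    · rintro (rfl | h)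
      · refine ⟨0, ?_⟩
        rw [Fin.ext_iff, val_eMap, v1]
        simp
      · rw [Fin.lt_def] at h
        refine ⟨⟨(y : ℕ) - (i : ℕ) - 1, by omega⟩, ?_⟩
        rw [Fin.ext_iff, val_eMap, v1, if_neg]
        · show (i : ℕ) + ((y : ℕ) - (i : ℕ) - 1 + 1) = (y : ℕ)
          omega
        · show ¬((y : ℕ) - (i : ℕ) - 1 < 1)
          omega
    · rintro ⟨k, rfl⟩
      rw [Fin.ext_iff, Fin.lt_def, val_eMap, v1]
      by_cases hk : (k : ℕ) < 1
      · left; rw [if_pos hk]; omega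
      · right; rw [if_neg hk]; omega
  have memIcoi : ∀ y : Fin n, y ∈ Finset.Ico i (⟨n - 1, by omega⟩ : Fin n) ↔
      ∃ k : Fin (m+1), eMap n i m hm (Fin.succAbove (Fin.last (m+1)) k) = y := by
    intro y
    have hy := y.isLt
    rw [Finset.mem_Ico, Fin.le_def, Fin.lt_def]
    constructor
    · rintro ⟨h1, h2⟩
      refine ⟨⟨(y : ℕ) - (i : ℕ), by have h2' : (y : ℕ) < n - 1 := h2; omega⟩, ?_⟩
      rw [Fin.ext_iff, val_eMap, vL]
      show (i : ℕ) + ((y : ℕ) - (i : ℕ)) = (y : ℕ)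
      omega
    · rintro ⟨k, rfl⟩
      rw [val_eMap, vL]
      constructor
      · omega
      · show (i : ℕ) + (k : ℕ) < n - 1
        omega
  have memIoij : ∀ y : Fin n, y ∈ Finset.Ioi j ↔
      ∃ k : Fin m, eMap n i m hm ((k : Fin m).succ.succ) = y := by
    intro y
    have hy := y.isLt
    rw [Finset.mem_Ioi, Fin.lt_def]
    constructor
    · intro h
      refine ⟨⟨(y : ℕ) - (i : ℕ) - 2, by omega⟩, ?_⟩
      rw [Fin.ext_iff, val_eMap, v2]
      show (i : ℕ) + ((y : ℕ) - (i : ℕ) - 2 + 2) = (y : ℕ)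
      omega
    · rintro ⟨k, rfl⟩
      rw [val_eMap, v2]; omega
  have memIcoj : ∀ y : Fin n, y ∈ Finset.Ico j (⟨n - 1, by omega⟩ : Fin n) ↔
      ∃ k : Fin m, eMap n i m hm ((k : Fin m).castSucc.succ) = y := by
    intro y
    have hy := y.isLt
    rw [Finset.mem_Ico, Fin.le_def, Fin.lt_def]
    constructor
    · rintro ⟨h1, h2⟩
      refine ⟨⟨(y : ℕ) - (i : ℕ) - 1, by have h2' : (y : ℕ) < n - 1 := h2; omega⟩, ?_⟩
      rw [Fin.ext_iff, val_eMap, v3]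
      show (i : ℕ) + ((y : ℕ) - (i : ℕ) - 1 + 1) = (y : ℕ)
      omega
    · rintro ⟨k, rfl⟩
      rw [val_eMap, v3]
      constructor
      · omega
      · show (i : ℕ) + ((k : ℕ) + 1) < n - 1
        omega
  have hF2 : minorDet A' (Finset.Ici j) (Finset.Ici j) = ((A'.submatrix (eMap n i m hm)
      (eMap n i m hm)).submatrix (Fin.succAbove 0) (Fin.succAbove 0)).det := by
    rw [Matrix.submatrix_submatrix]
    refine minorDet_eq_det A' _ _ _ _ ?_ ?_ memIcij memIcij
    all_goals intro a b hab; rw [Fin.lt_def] at hab ⊢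
    all_goals simp only [Function.comp, val_eMap, v0]; omega
  have hF3 : minorDet A' (insert i (Finset.Ioi j)) (Finset.Ici j) =
      ((A'.submatrix (eMap n i m hm) (eMap n i m hm)).submatrix
        (Fin.succAbove 1) (Fin.succAbove 0)).det := by
    rw [Matrix.submatrix_submatrix]
    refine minorDet_eq_det A' _ _ _ _ ?_ ?_ memIns memIcij
    all_goals intro a b hab; rw [Fin.lt_def] at hab ⊢
    · simp only [Function.comp, val_eMap, v1]
      split_ifs <;> omega
    · simp only [Function.comp, val_eMap, v0]; omega
  -- switching from A' to genMat on columns below the last one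
  have hgen : ∀ (κ : ℕ) (f g : Fin κ → Fin (m+2)),
      (∀ c, ((eMap n i m hm (g c) : Fin n) : ℕ) ≠ n - 1) →
      (A'.submatrix (eMap n i m hm) (eMap n i m hm)).submatrix f g =
      (genMat n).submatrix (fun k => eMap n i m hm (f k))
        (fun k => eMap n i m hm (g k)) := by
    intro κ f g hc
    ext r c
    simp only [Matrix.submatrix_apply]
    rw [hA', if_neg (hc c)]
  have hF4' := hgen (m+1) (Fin.succAbove 0) (Fin.succAbove (Fin.last (m+1)))
    (by intro c; rw [val_eMap, vL]; omega)
  have hF5' := hgen (m+1) (Fin.succAbove 1) (Fin.succAbove (Fin.last (m+1)))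
    (by intro c; rw [val_eMap, vL]; omega)
  have hF6' := hgen m (fun k => k.succ.succ) (fun k => k.castSucc.succ)
    (by intro c; rw [val_eMap, v3]; omega)
  have hF4 : minorDet (genMat n) (Finset.Ioi i) (Finset.Ico i (⟨n - 1, by omega⟩ : Fin n)) =
      ((genMat n).submatrix (fun k => eMap n i m hm (Fin.succAbove 0 k))
        (fun k => eMap n i m hm (Fin.succAbove (Fin.last (m+1)) k))).det := by
    refine minorDet_eq_det _ _ _ _ _ ?_ ?_ memIoii memIcoi
    · intro a b hab; rw [Fin.lt_def] at hab ⊢; simp only [val_eMap, v0]; omega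
    · intro a b hab; rw [Fin.lt_def] at hab ⊢; simp only [val_eMap, vL]; omega
  have hF5 : minorDet (genMat n) (insert i (Finset.Ioi j))
        (Finset.Ico i (⟨n - 1, by omega⟩ : Fin n)) =
      ((genMat n).submatrix (fun k => eMap n i m hm (Fin.succAbove 1 k))
        (fun k => eMap n i m hm (Fin.succAbove (Fin.last (m+1)) k))).det := by
    refine minorDet_eq_det _ _ _ _ _ ?_ ?_ memIns memIcoi
    · intro a b hab; rw [Fin.lt_def] at hab ⊢; simp only [val_eMap, v1]
      split_ifs <;> omega
    · intro a b hab; rw [Fin.lt_def] at hab ⊢; simp only [val_eMap, vL]; omega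
  have hF6 : minorDet (genMat n) (Finset.Ioi j) (Finset.Ico j (⟨n - 1, by omega⟩ : Fin n)) =
      ((genMat n).submatrix (fun k : Fin m => eMap n i m hm k.succ.succ)
        (fun k : Fin m => eMap n i m hm k.castSucc.succ)).det := by
    refine minorDet_eq_det _ _ _ _ _ ?_ ?_ memIoij memIcoj
    · intro a b hab; rw [Fin.lt_def] at hab ⊢; simp only [val_eMap, v2]; omega
    · intro a b hab; rw [Fin.lt_def] at hab ⊢; simp only [val_eMap, v3]; omega
  -- nonvanishing
  have hgen0 : ∀ (a b : Fin n), genMat n a b ≠ 0 := by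
    intro a b h
    have h2 : MvPolynomial.X (R := ℚ) (a, b) = 0 :=
      IsFractionRing.injective (MvPolynomial (Fin n × Fin n) ℚ) (GenField n)
        (by rw [map_zero]; exact h)
    exact MvPolynomial.X_ne_zero _ h2
  have hMi := genDet_ne_zero (fun k => eMap n i m hm (Fin.succAbove 0 k))
      (fun k => eMap n i m hm (Fin.succAbove (Fin.last (m+1)) k))
      (by intro r c; rw [val_eMap, val_eMap, v0, vL, Fin.ext_iff]; omega)
  have hMj := genDet_ne_zero (fun k : Fin m => eMap n i m hm k.succ.succ)
      (fun k : Fin m => eMap n i m hm k.castSucc.succ)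
      (by intro r c; rw [val_eMap, val_eMap, v2, v3, Fin.ext_iff]; omega)
  -- the two instances of the hypothesis
  have hypi := hyp i
  rw [hF1, hF4, show n - 1 - (i : ℕ) = m + 1 by omega] at hypi
  have hypj := hyp j
  rw [hF2, hF6, show n - 1 - (j : ℕ) = m by omega] at hypj
  have hT0 : (A'.submatrix (eMap n i m hm) (eMap n i m hm)).det ≠ 0 := by
    rw [hypi]
    exact mul_ne_zero (mul_ne_zero (pow_ne_zero _ (by norm_num)) (hgen0 _ _)) hMi
  have hDJ := desnanot_jacobi _ hT0
  rw [hF4', hF5', hF6'] at hDJ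
  have hD0 : ((A'.submatrix (eMap n i m hm) (eMap n i m hm)).submatrix
      (Fin.succAbove 0) (Fin.succAbove 0)).det ≠ 0 := by
    rw [hypj]
    exact mul_ne_zero (mul_ne_zero (pow_ne_zero _ (by norm_num)) (hgen0 _ _)) hMj
  refine ⟨⟨by rw [hF2]; exact hD0, hgen0 _ _, by rw [hF4]; exact hMi⟩, ?_⟩
  rw [hF3, hF2, hF5, hF4]
  rw [div_add_div _ _ (hgen0 j ⟨n - 1, by omega⟩) hMi,
    div_eq_div_iff hD0 (mul_ne_zero (hgen0 j ⟨n - 1, by omega⟩) hMi)]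
  rw [hypi] at hDJ
  rw [hypj] at hDJ ⊢
  linear_combination (genMat n j ⟨n - 1, by omega⟩) * hDJ
end

section
/- There exists a unique n×n matrix B = (b_{i,j}) over K with the following three properties: (1) b_{i,j} = a_{i,j} whenever i + j ≤ n; (2) for every pair (i,j) with i + j > n, the difference b_{i,j} − a_{i,j} lies in the subfield of K generated over ℚ by the indeterminates {a_{k,ℓ} : k ≥ i, ℓ ≤ j, (k,ℓ) ≠ (i,j)}; (3) b_{n,i} = a_{n,i} for all 1 ≤ i ≤ n, and for all 1 ≤ i < j ≤ n, det(B; {n−j+i, …, n}, {i, …, j}) = (−1)^{(j−i+1)(j−i)/2} · ∏_{t=0}^{j−i} a_{n−t, i+t} (the signed product of the antidiagonal entries of that block of A). -/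
noncomputable def Xf (n r c : ℕ) : GenField n :=
  if h : r < n ∧ c < n then genMat n ⟨r, h.1⟩ ⟨c, h.2⟩ else 0

noncomputable def Bf (n : ℕ) : ℕ → ℕ → GenField n := fun r c =>
  if hr : r + 1 < n ∧ n ≤ r + c + 1 ∧ c < n then
    Xf n r c -
      (∑ p : Fin (n - 1 - r),
          (-1) ^ (p : ℕ) * Bf n r (c - (n - 1 - r) + p) *
            (Matrix.of fun r' c' : Fin (n - 1 - r) =>
                Bf n (r + 1 + r')
                  (c - (n - 1 - r) + ((p.castSucc.succAbove c' : Fin (n - 1 - r + 1)) : ℕ))).det) /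
      ((-1) ^ (n - 1 - r) *
        (Matrix.of fun r' c' : Fin (n - 1 - r) => Bf n (r + 1 + r') (c - (n - 1 - r) + c')).det)
  else Xf n r c
termination_by r c => (n - r, c)
decreasing_by
  · right; have := p.isLt; omega
  · left; omega
  · left; omega

section
variable {n : ℕ}

lemma Xf_eq {r c : ℕ} (hr : r < n) (hc : c < n) :
    Xf n r c = genMat n ⟨r, hr⟩ ⟨c, hc⟩ := dif_pos ⟨hr, hc⟩

lemma Xf_ne_zero {r c : ℕ} (hr : r < n) (hc : c < n) : Xf n r c ≠ 0 := by
  rw [Xf_eq hr hc, genMat]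
  rw [Ne, IsFractionRing.to_map_eq_zero_iff]
  exact MvPolynomial.X_ne_zero _

lemma Bf_known {r c : ℕ} (h : ¬(r + 1 < n ∧ n ≤ r + c + 1 ∧ c < n)) : Bf n r c = Xf n r c := by
  rw [Bf]; exact dif_neg h

lemma Bf_unknown {r c k i : ℕ} (h1 : r + 1 < n) (h3 : c < n) (hk : k = n - 1 - r)
    (hi : c = i + k) :
    Bf n r c = Xf n r c -
      (∑ p : Fin k, (-1) ^ (p : ℕ) * Bf n r (i + p) *
        (Matrix.of fun r' c' : Fin k =>
          Bf n (r + 1 + r') (i + ((p.castSucc.succAbove c' : Fin (k + 1)) : ℕ))).det) /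
      ((-1) ^ k * (Matrix.of fun r' c' : Fin k => Bf n (r + 1 + r') (i + (c' : ℕ))).det) := by
  subst hk; subst hi
  rw [Bf, dif_pos ⟨h1, by omega, h3⟩]
  simp only [Nat.add_sub_cancel]

lemma prodX_ne_zero {k i : ℕ} (h : i + k ≤ n) :
    (∏ t : Fin k, Xf n (n - 1 - (t : ℕ)) (i + (t : ℕ))) ≠ 0 := by
  refine Finset.prod_ne_zero_iff.mpr fun t _ => ?_
  have := t.isLt
  exact Xf_ne_zero (by omega) (by omega)

lemma signExp (k : ℕ) : (k + 1) * k / 2 = k * (k - 1) / 2 + k := by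
  have h1 := Finset.sum_range_id_mul_two k
  have h2 : (∑ i ∈ Finset.range (k + 1), i) * 2 = (k + 1) * k := by
    simpa using Finset.sum_range_id_mul_two (k + 1)
  have h3 : ∑ i ∈ Finset.range (k + 1), i = (∑ i ∈ Finset.range k, i) + k :=
    Finset.sum_range_succ _ _
  rw [← h1, ← h2, h3]; omega

end


section
variable {n : ℕ}

lemma detBlock : ∀ k : ℕ, 1 ≤ k → ∀ i : ℕ, i + k ≤ n →
    (Matrix.of fun r' c' : Fin k => Bf n (n - k + (r' : ℕ)) (i + (c' : ℕ))).det =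
      (-1) ^ (k * (k - 1) / 2) * ∏ t : Fin k, Xf n (n - 1 - (t : ℕ)) (i + (t : ℕ)) := by
  intro k
  induction k with
  | zero => omega
  | succ k ih =>
    intro _ i hi
    rcases Nat.eq_zero_or_pos k with rfl | hk1
    · rw [Matrix.det_fin_one]
      simp only [Matrix.of_apply, Fin.val_zero, Nat.add_zero, Fin.prod_univ_one, pow_zero,
        one_mul, Nat.sub_zero]
      rw [Bf_known (by omega)]
      norm_num
    · -- k ≥ 1
      set r := n - (k + 1) with hrdef
      have hrlt : r + 1 < n := by omega
      have hclt : i + k < n := by omega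
      have hBf := Bf_unknown (n := n) (k := k) (i := i) hrlt hclt (by omega) rfl
      have hD : (Matrix.of fun r' c' : Fin k => Bf n (r + 1 + (r' : ℕ)) (i + (c' : ℕ))).det =
          (-1) ^ (k * (k - 1) / 2) * ∏ t : Fin k, Xf n (n - 1 - (t : ℕ)) (i + (t : ℕ)) := by
        rw [← ih hk1 i (by omega)]
        have hfun : (fun (r' c' : Fin k) => Bf n (r + 1 + (r' : ℕ)) (i + (c' : ℕ)))
            = fun (r' c' : Fin k) => Bf n (n - k + (r' : ℕ)) (i + (c' : ℕ)) := by
          funext a b; congr 1; omega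
        rw [hfun]
      have hM : ∀ j : Fin (k + 1),
          (Matrix.of fun r' c' : Fin (k + 1) =>
              Bf n (n - (k + 1) + (r' : ℕ)) (i + (c' : ℕ))).submatrix Fin.succ j.succAbove =
            Matrix.of fun r' c' : Fin k =>
              Bf n (r + 1 + (r' : ℕ)) (i + ((j.succAbove c' : Fin (k + 1)) : ℕ)) := by
        intro j; ext a b
        simp only [Matrix.submatrix_apply, Matrix.of_apply, Fin.val_succ]
        congr 1; omega
      rw [Matrix.det_succ_row_zero, Fin.sum_univ_castSucc]
      simp only [Matrix.of_apply, Fin.val_zero, Nat.add_zero, Fin.val_last,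
        Fin.coe_castSucc, Nat.add_sub_cancel]
      simp only [← hrdef] at hM
      simp only [hM]
      simp only [Fin.succAbove_last, Fin.coe_castSucc]
      rw [hBf, hD, Fin.prod_univ_castSucc]
      simp only [Fin.coe_castSucc, Fin.val_last]
      rw [show n - 1 - k = r from by omega, signExp, pow_add]
      have hP : (∏ t : Fin k, Xf n (n - 1 - (t : ℕ)) (i + (t : ℕ))) ≠ 0 :=
        prodX_ne_zero (by omega)
      have h1 : ((-1 : GenField n)) ^ k ≠ 0 := pow_ne_zero _ (by norm_num)
      have h2 : ((-1 : GenField n)) ^ (k * (k - 1) / 2) ≠ 0 := pow_ne_zero _ (by norm_num)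
      field_simp
      ring
end

section
variable {n : ℕ}

lemma minorDet_eq {F : Type*} [CommRing F] {m : ℕ} (M : Matrix (Fin m) (Fin m) F)
    {R C : Finset (Fin m)} {k : ℕ} (hR : R.card = k) (hC : C.card = k)
    (f g : Fin k → Fin m) (hf : ∀ p, f p ∈ R) (hg : ∀ q, g q ∈ C)
    (hfm : StrictMono f) (hgm : StrictMono g) :
    minorDet M R C = (Matrix.of fun p q : Fin k => M (f p) (g q)).det := by
  subst hR
  have h : R.card = C.card := hC.symm
  rw [minorDet, dif_pos h]
  have h1 : f = R.orderEmbOfFin rfl := Finset.orderEmbOfFin_unique rfl hf hfm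
  have h2 : g = C.orderEmbOfFin h.symm := Finset.orderEmbOfFin_unique h.symm hg hgm
  have : M.submatrix (fun i => R.orderEmbOfFin rfl i) (fun i => C.orderEmbOfFin h.symm i)
      = Matrix.of fun p q => M (f p) (g q) := by
    ext p q
    rw [Matrix.submatrix_apply, Matrix.of_apply, h1, h2]
  rw [this]

lemma minorDet_Ici_Icc (M : Matrix (Fin n) (Fin n) (GenField n)) (iF jF : Fin n)
    (hij : iF < jF) (x : Fin n) (hx : (x : ℕ) = n - 1 - ((jF : ℕ) - (iF : ℕ))) :
    minorDet M (Finset.Ici x) (Finset.Icc iF jF) =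
      (Matrix.of fun p q : Fin ((jF : ℕ) - (iF : ℕ) + 1) =>
        M ⟨(x : ℕ) + (p : ℕ), by have := p.isLt; have := jF.isLt; have := iF.isLt; omega⟩
          ⟨(iF : ℕ) + (q : ℕ), by have := q.isLt; have := jF.isLt; omega⟩).det := by
  have hjn := jF.isLt
  have hijv : (iF : ℕ) < (jF : ℕ) := hij
  apply minorDet_eq
  · rw [Fin.card_Ici]; omega
  · rw [Fin.card_Icc]; omega
  · intro p
    rw [Finset.mem_Ici, Fin.le_def]
    exact Nat.le_add_right _ _
  · intro q
    rw [Finset.mem_Icc]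
    constructor
    · rw [Fin.le_def]; exact Nat.le_add_right _ _
    · rw [Fin.le_def]
      show (iF : ℕ) + (q : ℕ) ≤ (jF : ℕ)
      have := q.isLt; omega
  · intro a b hab
    rw [Fin.lt_def]
    show (x : ℕ) + (a : ℕ) < (x : ℕ) + (b : ℕ)
    have := Fin.lt_def.mp hab; omega
  · intro a b hab
    rw [Fin.lt_def]
    show (iF : ℕ) + (a : ℕ) < (iF : ℕ) + (b : ℕ)
    have := Fin.lt_def.mp hab; omega

lemma det_mem {F : Type*} [Field F] (s : Subfield F) {k : ℕ} (M : Matrix (Fin k) (Fin k) F)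
    (h : ∀ i j, M i j ∈ s) : M.det ∈ s := by
  rw [Matrix.det_apply]
  exact sum_mem fun σ _ => zsmul_mem (prod_mem fun i _ => h _ _) _

def Sset (i j : Fin n) : Set (GenField n) :=
  {x : GenField n | ∃ k l : Fin n, i ≤ k ∧ l ≤ j ∧ (k, l) ≠ (i, j) ∧ x = genMat n k l}

lemma genMat_mem_S {i j k l : Fin n} (h1 : i ≤ k) (h2 : l ≤ j) (h3 : (k, l) ≠ (i, j)) :
    genMat n k l ∈ Sset i j := ⟨k, l, h1, h2, h3, rfl⟩

lemma Smono {i j i' j' : Fin n} (h1 : i ≤ i') (h2 : j' ≤ j) (h3 : (i', j') ≠ (i, j)) :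
    Sset i' j' ⊆ Sset i j := by
  rintro x ⟨k, l, hk, hl, hne, rfl⟩
  refine ⟨k, l, le_trans h1 hk, le_trans hl h2, ?_, rfl⟩
  intro h
  rw [Prod.mk.injEq] at h
  obtain ⟨rfl, rfl⟩ := h
  exact h3 (by rw [Prod.mk.injEq]; exact ⟨le_antisymm hk h1, le_antisymm h2 hl⟩)

lemma det_sub_factor {F : Type*} [CommRing F] {k : ℕ}
    (A B : Matrix (Fin (k + 1)) (Fin (k + 1)) F)
    (hrow : ∀ (p : Fin k) (q : Fin (k + 1)), A p.succ q = B p.succ q)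
    (h0 : ∀ q : Fin (k + 1), q ≠ Fin.last k → A 0 q = B 0 q) :
    A.det - B.det = (-1) ^ k * (A 0 (Fin.last k) - B 0 (Fin.last k)) *
      (A.submatrix Fin.succ (Fin.last k).succAbove).det := by
  rw [Matrix.det_succ_row_zero A, Matrix.det_succ_row_zero B]
  have hm : ∀ j : Fin (k + 1),
      B.submatrix Fin.succ j.succAbove = A.submatrix Fin.succ j.succAbove := by
    intro j; ext a b
    simp only [Matrix.submatrix_apply]
    exact (hrow a _).symm
  simp only [hm]
  rw [← Finset.sum_sub_distrib]
  rw [Finset.sum_eq_single (Fin.last k)]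
  · rw [Fin.val_last]; ring
  · intro q _ hq; rw [h0 q hq]; ring
  · intro h; exact absurd (Finset.mem_univ _) h

end

section
variable {n : ℕ}

lemma Bf_mem (dk : ℕ) : ∀ r : ℕ, n - 1 - r ≤ dk → ∀ dc c : ℕ, c ≤ dc →
    ∀ (hr : r < n) (hc : c < n), n ≤ r + c + 1 →
    Bf n r c - genMat n ⟨r, hr⟩ ⟨c, hc⟩ ∈ Subfield.closure (Sset ⟨r, hr⟩ ⟨c, hc⟩) := by
  induction dk using Nat.strong_induction_on with
  | _ dk ihk =>
  intro r hrdk dc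
  induction dc using Nat.strong_induction_on with
  | _ dc ihc =>
  intro c hcdc hr hc hsum
  by_cases hrow : r + 1 < n
  case neg =>
    rw [Bf_known (by omega), Xf_eq hr hc, sub_self]
    exact zero_mem _
  case pos =>
  have entry : ∀ p q : ℕ, ∀ (hpn : p < n) (hqn : q < n), r ≤ p → q ≤ c → ¬(p = r ∧ q = c) →
      Bf n p q ∈ Subfield.closure (Sset (⟨r, hr⟩ : Fin n) ⟨c, hc⟩) := by
    intro p q hpn hqn hp hq hne
    have hgen : genMat n ⟨p, hpn⟩ ⟨q, hqn⟩ ∈ Sset (⟨r, hr⟩ : Fin n) ⟨c, hc⟩ :=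
      genMat_mem_S (by rw [Fin.le_def]; exact hp) (by rw [Fin.le_def]; exact hq)
        (by simp only [Ne, Prod.mk.injEq, Fin.mk.injEq]; exact fun h => hne h)
    by_cases hu : p + 1 < n ∧ n ≤ p + q + 1
    · have hdiff : Bf n p q - genMat n ⟨p, hpn⟩ ⟨q, hqn⟩ ∈
          Subfield.closure (Sset (⟨p, hpn⟩ : Fin n) ⟨q, hqn⟩) := by
        rcases Nat.lt_or_ge r p with hpr | hpr
        · exact ihk (n - 1 - p) (by omega) p le_rfl q q le_rfl hpn hqn (by omega)
        · have hpr' : p = r := le_antisymm hpr hp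
          subst hpr'
          exact ihc (dc - 1) (by omega) q (by omega) hpn hqn (by omega)
      have hrw : Bf n p q = genMat n ⟨p, hpn⟩ ⟨q, hqn⟩ +
          (Bf n p q - genMat n ⟨p, hpn⟩ ⟨q, hqn⟩) := by ring
      rw [hrw]
      refine add_mem (Subfield.subset_closure hgen)
        (Subfield.closure_mono (Smono ?_ ?_ ?_) hdiff)
      · rw [Fin.le_def]; exact hp
      · rw [Fin.le_def]; exact hq
      · simp only [Ne, Prod.mk.injEq, Fin.mk.injEq]; exact fun h => hne h
    · rw [Bf_known (by omega), Xf_eq hpn hqn]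
      exact Subfield.subset_closure hgen
  obtain ⟨k, hkdef⟩ : ∃ k, k = n - 1 - r := ⟨_, rfl⟩
  obtain ⟨i0, hidef⟩ : ∃ i0, i0 = c - k := ⟨_, rfl⟩
  have hik : c = i0 + k := by omega
  rw [Bf_unknown hrow hc hkdef hik, Xf_eq hr hc, sub_sub_cancel_left]
  refine neg_mem (Subfield.div_mem _ (sum_mem fun p _ => ?_)
    (mul_mem (pow_mem (neg_mem (one_mem _)) k) (det_mem _ _ fun a b => ?_)))
  · refine mul_mem (mul_mem (pow_mem (neg_mem (one_mem _)) _) ?_) (det_mem _ _ fun a b => ?_)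
    · have := p.isLt
      exact entry r (i0 + ↑p) hr (by omega) le_rfl (by omega) (by omega)
    · have ha := a.isLt
      have hsb : ((p.castSucc.succAbove b : Fin (k + 1)) : ℕ) ≤ k := Fin.is_le _
      exact entry (r + 1 + ↑a) (i0 + ↑(p.castSucc.succAbove b)) (by omega) (by omega)
        (by omega) (by omega) (by omega)
  · have ha := a.isLt
    have hb := b.isLt
    exact entry (r + 1 + ↑a) (i0 + ↑b) (by omega) (by omega) (by omega) (by omega) (by omega)

lemma Bf_minor (hn : 1 ≤ n) (iF jF : Fin n) (hij : iF < jF) :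
    minorDet (Matrix.of fun a b : Fin n => Bf n ↑a ↑b)
        (Finset.Ici (⟨n - 1 - ((jF : ℕ) - (iF : ℕ)), by omega⟩ : Fin n))
        (Finset.Icc iF jF) =
      (-1 : GenField n) ^ ((((jF : ℕ) - (iF : ℕ)) + 1) * ((jF : ℕ) - (iF : ℕ)) / 2) *
        ∏ t : Fin ((jF : ℕ) - (iF : ℕ) + 1),
          Xf n (n - 1 - (t : ℕ)) ((iF : ℕ) + (t : ℕ)) := by
  have hjn := jF.isLt
  have hijv : (iF : ℕ) < (jF : ℕ) := hij
  rw [minorDet_Ici_Icc _ iF jF hij _ rfl]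
  have key := detBlock (n := n) ((jF : ℕ) - (iF : ℕ) + 1) (by omega) (iF : ℕ) (by omega)
  simp only [Nat.add_sub_cancel] at key
  rw [← key]
  congr 1
  ext a b
  show Bf n (n - 1 - ((jF : ℕ) - (iF : ℕ)) + (a : ℕ)) ((iF : ℕ) + (b : ℕ)) = _
  show _ = Bf n (n - ((jF : ℕ) - (iF : ℕ) + 1) + (a : ℕ)) ((iF : ℕ) + (b : ℕ))
  congr 1
  omega

end

section
variable {n : ℕ}

lemma minorDet_Ici_Icc' (M : Matrix (Fin n) (Fin n) (GenField n)) (Mf : ℕ → ℕ → GenField n)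
    (hMf : ∀ a b (ha : a < n) (hb : b < n), M ⟨a, ha⟩ ⟨b, hb⟩ = Mf a b)
    (iF jF : Fin n) (hij : iF < jF)
    (d : ℕ) (hd : (jF : ℕ) - (iF : ℕ) = d) (r i0 : ℕ) (hr : r = n - 1 - d)
    (hi0 : i0 = (iF : ℕ)) :
    minorDet M
        (Finset.Ici (⟨n - 1 - ((jF : ℕ) - (iF : ℕ)), by have := jF.isLt; omega⟩ : Fin n))
        (Finset.Icc iF jF)
      = (Matrix.of fun p q : Fin (d + 1) => Mf (r + (p : ℕ)) (i0 + (q : ℕ))).det := by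
  subst hd; subst hr; subst hi0
  rw [minorDet_Ici_Icc M iF jF hij _ rfl]
  congr 1
  ext a b
  rw [Matrix.of_apply, Matrix.of_apply, hMf]

lemma rhs_conv (iF jF : Fin n) (hij : iF < jF) (d : ℕ) (hd : (jF : ℕ) - (iF : ℕ) = d) :
    ((-1 : GenField n) ^ ((((jF : ℕ) - (iF : ℕ)) + 1) * ((jF : ℕ) - (iF : ℕ)) / 2) *
      ∏ t ∈ (Finset.range ((jF : ℕ) - (iF : ℕ) + 1)).attach,
        genMat n ⟨n - 1 - (t : ℕ), by have := jF.isLt; omega⟩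
          ⟨(iF : ℕ) + (t : ℕ), by
            have := Finset.mem_range.mp t.2
            have := jF.isLt
            have : (iF : ℕ) < (jF : ℕ) := hij
            omega⟩)
    = (-1 : GenField n) ^ ((d + 1) * d / 2) *
        ∏ t : Fin (d + 1), Xf n (n - 1 - (t : ℕ)) ((iF : ℕ) + (t : ℕ)) := by
  subst hd
  congr 1
  rw [show (∏ t : Fin ((jF : ℕ) - (iF : ℕ) + 1), Xf n (n - 1 - (t : ℕ)) ((iF : ℕ) + (t : ℕ)))
      = ∏ m ∈ Finset.range ((jF : ℕ) - (iF : ℕ) + 1), Xf n (n - 1 - m) ((iF : ℕ) + m) from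
    Fin.prod_univ_eq_prod_range (fun m => Xf n (n - 1 - m) ((iF : ℕ) + m))
      ((jF : ℕ) - (iF : ℕ) + 1)]
  rw [← Finset.prod_attach (Finset.range ((jF : ℕ) - (iF : ℕ) + 1))
    (fun m => Xf n (n - 1 - m) ((iF : ℕ) + m))]
  refine Finset.prod_congr rfl fun t _ => ?_
  have ht := Finset.mem_range.mp t.2
  have hj := jF.isLt
  have hlt : (iF : ℕ) < (jF : ℕ) := hij
  exact (Xf_eq (by omega) (by omega)).symm

end

/-- there is a unique `n × n` matrix `B` over `K` with (using 1-based
indices `i+1`, `j+1` for the 0-based `i`, `j`):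
(1) `b_{i,j} = a_{i,j}` whenever `i + j ≤ n`;
(2) for `i + j > n`, `b_{i,j} − a_{i,j}` lies in the subfield of `K` generated by
    `{a_{k,ℓ} : k ≥ i, ℓ ≤ j, (k,ℓ) ≠ (i,j)}` (any subfield of `K` contains `ℚ`);
(3) the bottom row of `B` is that of `A`, and for `i < j`,
    `det(B; {n−j+i,…,n}, {i,…,j}) = (−1)^{(j−i+1)(j−i)/2} ∏_{t=0}^{j−i} a_{n−t,i+t}`. -/
theorem exists_unique_antidiagonal_normalized_matrix (n : ℕ) (hn : 1 ≤ n) :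
    ∃! B : Matrix (Fin n) (Fin n) (GenField n),
      (∀ i j : Fin n, (i : ℕ) + 1 + ((j : ℕ) + 1) ≤ n → B i j = genMat n i j) ∧
      (∀ i j : Fin n, n < (i : ℕ) + 1 + ((j : ℕ) + 1) →
        B i j - genMat n i j ∈ Subfield.closure
          {x : GenField n | ∃ k l : Fin n, i ≤ k ∧ l ≤ j ∧ (k, l) ≠ (i, j) ∧
            x = genMat n k l}) ∧
      (∀ i : Fin n, B ⟨n - 1, by omega⟩ i = genMat n ⟨n - 1, by omega⟩ i) ∧
      (∀ i j : Fin n, i < j →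
        minorDet B (Finset.Ici (⟨n - 1 - ((j : ℕ) - (i : ℕ)), by omega⟩ : Fin n))
            (Finset.Icc i j) =
          (-1 : GenField n) ^ ((((j : ℕ) - (i : ℕ)) + 1) * ((j : ℕ) - (i : ℕ)) / 2) *
            ∏ t ∈ (Finset.range ((j : ℕ) - (i : ℕ) + 1)).attach,
              genMat n ⟨n - 1 - (t : ℕ), by omega⟩
                ⟨(i : ℕ) + (t : ℕ), by
                  have ht := Finset.mem_range.mp t.2
                  have hj := j.isLt
                  omega⟩) := by
  refine ⟨Matrix.of fun a b : Fin n => Bf n ↑a ↑b, ⟨?_, ?_, ?_, ?_⟩, ?_⟩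
  · -- (1)
    intro i j hij
    show Bf n ↑i ↑j = genMat n i j
    rw [Bf_known (by omega), Xf_eq i.isLt j.isLt]
  · -- (2)
    intro i j hij
    have hi := i.isLt; have hj := j.isLt
    exact Bf_mem (n := n) n ↑i (by omega) n ↑j (by omega) i.isLt j.isLt (by omega)
  · -- (3)
    intro i
    have : ∀ (pf : n - 1 < n),
        Matrix.of (fun a b : Fin n => Bf n ↑a ↑b) ⟨n - 1, pf⟩ i = genMat n ⟨n - 1, pf⟩ i := by
      intro pf
      show Bf n (n - 1) ↑i = genMat n ⟨n - 1, pf⟩ i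
      rw [Bf_known (by omega), Xf_eq (by omega) i.isLt]
    exact this _
  · -- (4)
    intro i j hij
    exact (Bf_minor hn i j hij).trans (rhs_conv i j hij ((j : ℕ) - (i : ℕ)) rfl).symm
  · -- uniqueness
    rintro B1 ⟨h1, h2, h3, h4⟩
    obtain ⟨B1', hB1'⟩ : ∃ f : ℕ → ℕ → GenField n,
        ∀ (a b : ℕ) (ha : a < n) (hb : b < n), f a b = B1 ⟨a, ha⟩ ⟨b, hb⟩ :=
      ⟨fun a b => if h : a < n ∧ b < n then B1 ⟨a, h.1⟩ ⟨b, h.2⟩ else 0,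
        fun a b ha hb => dif_pos ⟨ha, hb⟩⟩
    have key : ∀ dk r, n - 1 - r ≤ dk → ∀ dc c, c ≤ dc → ∀ (hr : r < n) (hc : c < n),
        B1 ⟨r, hr⟩ ⟨c, hc⟩ = Bf n r c := by
      intro dk
      induction dk using Nat.strong_induction_on with
      | _ dk ihk =>
      intro r hrdk dc
      induction dc using Nat.strong_induction_on with
      | _ dc ihc =>
      intro c hcdc hr hc
      by_cases hca : r + c + 2 ≤ n
      · rw [Bf_known (by omega), Xf_eq hr hc]
        exact h1 ⟨r, hr⟩ ⟨c, hc⟩ (show r + 1 + (c + 1) ≤ n by omega)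
      · by_cases hrow : r + 1 < n
        case neg =>
          have hre : (⟨r, hr⟩ : Fin n) = ⟨n - 1, by omega⟩ := Fin.ext (by show r = n - 1; omega)
          rw [Bf_known (by omega), Xf_eq hr hc, hre]
          exact h3 ⟨c, hc⟩
        case pos =>
        obtain ⟨k, hkdef⟩ : ∃ k, k = n - 1 - r := ⟨_, rfl⟩
        have hk1 : 1 ≤ k := by omega
        have hkc : k ≤ c := by omega
        have hiFlt : c - k < n := by omega
        have hijF : (⟨c - k, hiFlt⟩ : Fin n) < ⟨c, hc⟩ := by
          rw [Fin.lt_def]; show c - k < c; omega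
        have hdd : ((⟨c, hc⟩ : Fin n) : ℕ) - ((⟨c - k, hiFlt⟩ : Fin n) : ℕ) = k := by
          show c - (c - k) = k; omega
        have hdet := h4 ⟨c - k, hiFlt⟩ ⟨c, hc⟩ hijF
        rw [minorDet_Ici_Icc' B1 B1' (fun a b ha hb => (hB1' a b ha hb).symm)
          ⟨c - k, hiFlt⟩ ⟨c, hc⟩ hijF k hdd r (c - k) (by omega) rfl] at hdet
        rw [rhs_conv ⟨c - k, hiFlt⟩ ⟨c, hc⟩ hijF k hdd] at hdet
        -- Bf-side determinant
        have hA2 := detBlock (n := n) (k + 1) (by omega) (c - k) (by omega)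
        simp only [Nat.add_sub_cancel] at hA2
        have hrows : (Matrix.of fun p q : Fin (k + 1) => Bf n (n - (k + 1) + (p : ℕ)) (c - k + (q : ℕ)))
            = Matrix.of fun p q : Fin (k + 1) => Bf n (r + (p : ℕ)) (c - k + (q : ℕ)) := by
          ext a b; rw [Matrix.of_apply, Matrix.of_apply]; congr 1; omega
        rw [hrows] at hA2
        have hdd2 : (Matrix.of fun p q : Fin (k + 1) => B1' (r + (p : ℕ)) (c - k + (q : ℕ))).det
            = (Matrix.of fun p q : Fin (k + 1) => Bf n (r + (p : ℕ)) (c - k + (q : ℕ))).det :=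
          hdet.trans hA2.symm
        -- entrywise equality except top-right
        have hrowEq : ∀ (p : Fin k) (q : Fin (k + 1)),
            (Matrix.of fun p q : Fin (k + 1) => B1' (r + (p : ℕ)) (c - k + (q : ℕ))) p.succ q
              = (Matrix.of fun p q : Fin (k + 1) => Bf n (r + (p : ℕ)) (c - k + (q : ℕ))) p.succ q := by
          intro p q
          have hps : ((p.succ : Fin (k + 1)) : ℕ) = (p : ℕ) + 1 := rfl
          have hplt := p.isLt
          have hqle : (q : ℕ) ≤ k := Fin.is_le _
          have h1lt : r + ((p.succ : Fin (k + 1)) : ℕ) < n := by omega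
          have hqlt : c - k + (q : ℕ) < n := by omega
          show B1' (r + ((p.succ : Fin (k + 1)) : ℕ)) (c - k + (q : ℕ)) = _
          rw [hB1' _ _ h1lt hqlt]
          exact ihk (n - 1 - (r + ((p.succ : Fin (k + 1)) : ℕ))) (by omega)
            (r + ((p.succ : Fin (k + 1)) : ℕ)) le_rfl (c - k + (q : ℕ)) (c - k + (q : ℕ))
            le_rfl h1lt hqlt
        have h0Eq : ∀ q : Fin (k + 1), q ≠ Fin.last k →
            (Matrix.of fun p q : Fin (k + 1) => B1' (r + (p : ℕ)) (c - k + (q : ℕ))) 0 q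
              = (Matrix.of fun p q : Fin (k + 1) => Bf n (r + (p : ℕ)) (c - k + (q : ℕ))) 0 q := by
          intro q hq
          have h0v : ((0 : Fin (k + 1)) : ℕ) = 0 := rfl
          have hqk : (q : ℕ) < k := Fin.val_lt_last hq
          have hqlt : c - k + (q : ℕ) < n := by omega
          have hrlt : r + ((0 : Fin (k + 1)) : ℕ) < n := by omega
          show B1' (r + ((0 : Fin (k + 1)) : ℕ)) (c - k + (q : ℕ)) = _
          rw [hB1' _ _ hrlt hqlt]
          exact ihc (dc - 1) (by omega) (c - k + (q : ℕ)) (by omega) hrlt hqlt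
        have hsub := det_sub_factor
          (Matrix.of fun p q : Fin (k + 1) => B1' (r + (p : ℕ)) (c - k + (q : ℕ)))
          (Matrix.of fun p q : Fin (k + 1) => Bf n (r + (p : ℕ)) (c - k + (q : ℕ)))
          hrowEq h0Eq
        rw [hdd2, sub_self] at hsub
        -- minor nonzero
        have hminor : (Matrix.of fun p q : Fin (k + 1) =>
              B1' (r + (p : ℕ)) (c - k + (q : ℕ))).submatrix Fin.succ (Fin.last k).succAbove
            = Matrix.of fun p q : Fin k => Bf n (n - k + (p : ℕ)) (c - k + (q : ℕ)) := by
          ext a b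
          rw [Matrix.submatrix_apply, Fin.succAbove_last, Matrix.of_apply, Matrix.of_apply]
          have hav : ((a.succ : Fin (k + 1)) : ℕ) = (a : ℕ) + 1 := rfl
          have halt := a.isLt
          have hbv : ((b.castSucc : Fin (k + 1)) : ℕ) = (b : ℕ) := rfl
          have hblt := b.isLt
          have h1lt : r + ((a.succ : Fin (k + 1)) : ℕ) < n := by omega
          have hqlt : c - k + ((b.castSucc : Fin (k + 1)) : ℕ) < n := by omega
          rw [hB1' _ _ h1lt hqlt]
          rw [ihk (n - 1 - (r + ((a.succ : Fin (k + 1)) : ℕ))) (by omega)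
            (r + ((a.succ : Fin (k + 1)) : ℕ)) le_rfl (c - k + ((b.castSucc : Fin (k + 1)) : ℕ))
            (c - k + ((b.castSucc : Fin (k + 1)) : ℕ)) le_rfl h1lt hqlt]
          congr 1
          omega
        rw [hminor] at hsub
        have hm0 : (Matrix.of fun p q : Fin k => Bf n (n - k + (p : ℕ)) (c - k + (q : ℕ))).det ≠ 0 := by
          rw [detBlock k hk1 (c - k) (by omega)]
          exact mul_ne_zero (pow_ne_zero _ (by norm_num)) (prodX_ne_zero (by omega))
        have hδ : (Matrix.of fun p q : Fin (k + 1) => B1' (r + (p : ℕ)) (c - k + (q : ℕ))) 0 (Fin.last k)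
            - (Matrix.of fun p q : Fin (k + 1) => Bf n (r + (p : ℕ)) (c - k + (q : ℕ))) 0 (Fin.last k) = 0 := by
          rcases mul_eq_zero.mp hsub.symm with h' | h'
          · rcases mul_eq_zero.mp h' with h'' | h''
            · exact absurd h'' (pow_ne_zero _ (by norm_num))
            · exact h''
          · exact absurd h' hm0
        have hfin := sub_eq_zero.mp hδ
        have hB1v : (Matrix.of fun p q : Fin (k + 1) => B1' (r + (p : ℕ)) (c - k + (q : ℕ))) 0 (Fin.last k)
            = B1 ⟨r, hr⟩ ⟨c, hc⟩ := by
          show B1' (r + ((0 : Fin (k + 1)) : ℕ)) (c - k + ((Fin.last k : Fin (k + 1)) : ℕ)) = _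
          have h0v : ((0 : Fin (k + 1)) : ℕ) = 0 := rfl
          rw [h0v, Fin.val_last, Nat.add_zero, show c - k + k = c from by omega]
          exact hB1' r c hr hc
        have hBfv : (Matrix.of fun p q : Fin (k + 1) => Bf n (r + (p : ℕ)) (c - k + (q : ℕ))) 0 (Fin.last k)
            = Bf n r c := by
          show Bf n (r + ((0 : Fin (k + 1)) : ℕ)) (c - k + ((Fin.last k : Fin (k + 1)) : ℕ)) = _
          have h0v : ((0 : Fin (k + 1)) : ℕ) = 0 := rfl
          rw [h0v, Fin.val_last, Nat.add_zero, show c - k + k = c from by omega]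
        exact hB1v.symm.trans (hfin.trans hBfv)
    ext a b
    show B1 a b = Bf n ↑a ↑b
    have := key n ↑a (by omega) n ↑b (by omega) a.isLt b.isLt
    exact this
end

section
/- With the notation of the context, ∑_{j=1}^{n−1} s_j = ∑_{j=1}^{n−1} z_j, where s_j := (−1)^{1+(n−j)(n−j+1)/2} · c_j · E_j / (∏_{m=j}^{n−1} c_{m,m}). -/
/-- Index type for the indeterminates `c_{i,j}` (`j ≤ i`) and `z_1,…,z_{n-1}`. -/
abbrev CZIndex (n : ℕ) : Type :=
  {p : Fin (n - 1) × Fin (n - 1) // p.2 ≤ p.1} ⊕ Fin (n - 1)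

/-- The field of fractions of the polynomial ring over `ℚ` in the indeterminates
`c_{i,j}` (for `j ≤ i`, indices in `Fin (n-1)`) and `z_1, …, z_{n-1}`. -/
abbrev CZField (n : ℕ) : Type := FractionRing (MvPolynomial (CZIndex n) ℚ)

/-- The indeterminate `c_{i,j}` for `j ≤ i`, and `0` for `j > i`. -/
noncomputable def cvar (n : ℕ) (i j : Fin (n - 1)) : CZField n :=
  if h : j ≤ i then
    algebraMap (MvPolynomial (CZIndex n) ℚ) (CZField n)
      (MvPolynomial.X (Sum.inl ⟨(i, j), h⟩))
  else 0

/-- The indeterminate `z_j`. -/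
noncomputable def zvar (n : ℕ) (j : Fin (n - 1)) : CZField n :=
  algebraMap (MvPolynomial (CZIndex n) ℚ) (CZField n) (MvPolynomial.X (Sum.inr j))

/-- `c_j = ∑_{m ≤ j} c_{j,m}`. -/
noncomputable def csum (n : ℕ) (j : Fin (n - 1)) : CZField n :=
  ∑ m ∈ Finset.Iic j, cvar n j m

/-- The `(n−j)×(n−j)` matrix `M_j` (here `j` is 0-based: 1-based `j+1`, size
`n - 1 - j`): rows indexed by `i ∈ {j+1,…,n-2}` (0-based) followed by one final row;
columns indexed by `ℓ ∈ {n-2, n-3, …, j}` in decreasing order; entry `c_{i,ℓ}` if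
`ℓ ≤ i` and `0` if `ℓ > i`, final row entries `z_ℓ`. -/
noncomputable def Mj (n : ℕ) (j : ℕ) (hj : j < n - 1) :
    Matrix (Fin (n - 1 - j)) (Fin (n - 1 - j)) (CZField n) :=
  fun r c =>
    if hr : (r : ℕ) < n - 1 - j - 1 then
      cvar n ⟨j + 1 + (r : ℕ), by omega⟩ ⟨n - 2 - (c : ℕ), by omega⟩
    else
      zvar n ⟨n - 2 - (c : ℕ), by omega⟩

/-- `E_j = det M_j`. -/
noncomputable def Ej (n : ℕ) (j : ℕ) (hj : j < n - 1) : CZField n := (Mj n j hj).det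


open Equiv Equiv.Perm Matrix

section Aux

lemma tri_succ : ∀ N : ℕ, (N + 1) * N / 2 = N * (N - 1) / 2 + N := by
  intro N
  cases N with
  | zero => rfl
  | succ m =>
    have : (m + 1 + 1) * (m + 1) = (m + 1) * (m + 1 - 1) + 2 * (m + 1) := by
      simp [Nat.add_sub_cancel]; ring
    rw [this, Nat.add_mul_div_left _ _ (by norm_num)]

lemma sign_revPerm : ∀ N : ℕ,
    Perm.sign (Fin.revPerm : Perm (Fin N)) = (-1) ^ (N * (N - 1) / 2) := by
  intro N
  induction N with
  | zero => rw [Subsingleton.elim (Fin.revPerm : Perm (Fin 0)) 1]; simp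
  | succ n ih =>
    have hdec : (Fin.revPerm : Perm (Fin (n+1)))
        = Equiv.Perm.decomposeFin.symm (0, (Fin.revPerm : Perm (Fin n))) * finRotate (n+1) := by
      ext x
      refine Fin.lastCases ?_ (fun i => ?_) x
      · simp [finRotate_last, Equiv.Perm.decomposeFin_symm_apply_zero, Fin.rev_last]
      · simp only [Equiv.Perm.coe_mul, Function.comp_apply, Fin.revPerm_apply]
        rw [finRotate_succ_apply, Fin.coeSucc_eq_succ,
          Equiv.Perm.decomposeFin_symm_apply_succ, Fin.rev_castSucc]
        simp
    rw [hdec, _root_.map_mul, Equiv.Perm.decomposeFin.symm_sign, sign_finRotate, ih]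
    rw [if_pos rfl, one_mul, ← pow_add, Nat.add_sub_cancel, tri_succ n]

lemma sign_finRotate' (N : ℕ) (h : 1 ≤ N) :
    Perm.sign (finRotate N) = (-1) ^ (N - 1) := by
  obtain ⟨m, rfl⟩ : ∃ m, N = m + 1 := ⟨N - 1, by omega⟩
  simpa using sign_finRotate m

lemma finRotate_val {N : ℕ} (r : Fin N) :
    ((finRotate N) r : ℕ) = if (r : ℕ) = N - 1 then 0 else (r : ℕ) + 1 := by
  cases N with
  | zero => exact absurd r.isLt (by omega)
  | succ m =>
    rw [finRotate_succ_apply, Fin.val_add_one]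
    rcases eq_or_ne r (Fin.last m) with h | h
    · simp [h, Fin.val_last]
    · rw [if_neg h, if_neg (by simpa [Fin.ext_iff, Fin.val_last] using h)]

end Aux

/-- The matrix `B_j`: rows `m = j + r`, column `0` is the `z` column,
column `c ≥ 1` has entries `c_{j+c, m}`. -/
noncomputable def Bmat (n : ℕ) (j : ℕ) (hj : j < n - 1) :
    Matrix (Fin (n - 1 - j)) (Fin (n - 1 - j)) (CZField n) :=
  fun r c =>
    if (c : ℕ) = 0 then zvar n ⟨j + (r : ℕ), by omega⟩
    else cvar n ⟨j + (c : ℕ), by omega⟩ ⟨j + (r : ℕ), by omega⟩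

lemma Ej_eq_Bmat (n : ℕ) (j : ℕ) (hj : j < n - 1) :
    Ej n j hj
      = (-1 : CZField n) ^ ((n - 1 - j - 1) + (n - 1 - j) * (n - 1 - j - 1) / 2)
        * (Bmat n j hj).det := by
  have hN : 1 ≤ n - 1 - j := by omega
  have hM : Mj n j hj
      = ((Bmat n j hj)ᵀ.submatrix (⇑(finRotate (n - 1 - j))) (⇑(Fin.revPerm))) := by
    ext r c
    have hrev : ((Fin.revPerm c : Fin (n - 1 - j)) : ℕ) = n - 1 - j - 1 - (c : ℕ) := by
      simp only [Fin.revPerm_apply, Fin.val_rev]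
      omega
    have hrot := finRotate_val r
    simp only [Matrix.submatrix_apply, Matrix.transpose_apply, Mj, Bmat]
    by_cases hr : (r : ℕ) < n - 1 - j - 1
    · rw [dif_pos hr, if_neg (by rw [hrot, if_neg (by omega)]; omega)]
      congr 1 <;> [skip; skip] <;> apply Fin.ext <;>
        simp only [hrot, if_neg (by omega : ¬ (r : ℕ) = n - 1 - j - 1), hrev] <;> omega
    · rw [dif_neg hr, if_pos (by rw [hrot, if_pos (by omega)])]
      congr 1
      apply Fin.ext
      simp only [hrev]
      omega
  rw [Ej, hM]
  have h1 : ((Bmat n j hj)ᵀ.submatrix (⇑(finRotate (n - 1 - j))) (⇑(Fin.revPerm)))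
      = (((Bmat n j hj)ᵀ.submatrix id (⇑(Fin.revPerm))).submatrix
          (⇑(finRotate (n - 1 - j))) id) := rfl
  rw [h1, Matrix.det_permute, Matrix.det_permute', Matrix.det_transpose,
    sign_finRotate' _ hN, sign_revPerm]
  push_cast
  ring

noncomputable def Amat (n : ℕ) : Matrix (Fin (n - 1)) (Fin (n - 1)) (CZField n) :=
  Matrix.of fun m k => cvar n k m

lemma det_Amat (n : ℕ) : (Amat n).det = ∏ m : Fin (n - 1), cvar n m m := by
  have h : (Amat n).BlockTriangular id := by
    intro i j hij
    exact dif_neg (by exact fun h => absurd h (not_le.mpr hij))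
  rw [Matrix.det_of_upperTriangular h]
  rfl

lemma det_updateCol (n : ℕ) (j : Fin (n - 1)) :
    ((Amat n).updateCol j (fun m => zvar n m)).det
      = (∏ m ∈ Finset.Iio j, cvar n m m) * (Bmat n (j : ℕ) j.isLt).det := by
  have hsum : (j : ℕ) + (n - 1 - (j : ℕ)) = n - 1 := by omega
  set e : Fin (j : ℕ) ⊕ Fin (n - 1 - (j : ℕ)) ≃ Fin (n - 1) :=
    finSumFinEquiv.trans (finCongr hsum) with he
  have hinl : ∀ a : Fin (j : ℕ), e (Sum.inl a) = (⟨(a : ℕ), by omega⟩ : Fin (n - 1)) := by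
    intro a; apply Fin.ext; simp [he, finSumFinEquiv]
  have hinr : ∀ b : Fin (n - 1 - (j : ℕ)),
      e (Sum.inr b) = (⟨(j : ℕ) + (b : ℕ), by omega⟩ : Fin (n - 1)) := by
    intro b; apply Fin.ext; simp [he, finSumFinEquiv]
  rw [← Matrix.det_submatrix_equiv_self e]
  have hblocks : ((Amat n).updateCol j (fun m => zvar n m)).submatrix e e
      = Matrix.fromBlocks
          (Matrix.of fun a b : Fin (j : ℕ) =>
            cvar n ⟨(b : ℕ), by omega⟩ ⟨(a : ℕ), by omega⟩)
          (Matrix.of fun a b =>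
            ((Amat n).updateCol j (fun m => zvar n m)) (e (Sum.inl a)) (e (Sum.inr b)))
          0 (Bmat n (j : ℕ) j.isLt) := by
    ext r c
    rcases r with a | a <;> rcases c with b | b
    · simp only [Matrix.submatrix_apply, Matrix.fromBlocks_apply₁₁, Matrix.of_apply,
        hinl, Matrix.updateCol_apply]
      rw [if_neg (by simp only [Fin.ext_iff]; omega)]
      rfl
    · rfl
    · simp only [Matrix.submatrix_apply, Matrix.fromBlocks_apply₂₁, hinl, hinr,
        Matrix.updateCol_apply, Matrix.zero_apply]
      rw [if_neg (by simp only [Fin.ext_iff]; omega)]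
      simp only [Amat, Matrix.of_apply, cvar]
      rw [dif_neg]
      simp only [Fin.le_iff_val_le_val]
      omega
    · simp only [Matrix.submatrix_apply, Matrix.fromBlocks_apply₂₂, hinl, hinr,
        Matrix.updateCol_apply, Bmat]
      by_cases hb : (b : ℕ) = 0
      · rw [if_pos (by apply Fin.ext; simp only [Fin.ext_iff]; omega), if_pos hb]
      · rw [if_neg (by simp only [Fin.ext_iff]; omega), if_neg hb]
        rfl
  rw [hblocks, Matrix.det_fromBlocks_zero₂₁]
  congr 1
  rw [Matrix.det_of_upperTriangular (by
    intro a b hab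
    exact dif_neg (by simp only [Fin.le_iff_val_le_val]; exact fun h => absurd h (not_le.mpr hab)))]
  refine Finset.prod_bij (fun (a : Fin (j : ℕ)) _ => (⟨(a : ℕ), by omega⟩ : Fin (n - 1)))
    (fun a _ => Finset.mem_Iio.mpr (by rw [Fin.lt_iff_val_lt_val]; exact a.isLt)) ?_ ?_ ?_
  · intro a _ a' _ h
    apply Fin.ext
    simpa [Fin.ext_iff] using h
  · intro m hm
    exact ⟨⟨(m : ℕ), Fin.lt_iff_val_lt_val.mp (Finset.mem_Iio.mp hm)⟩,
      Finset.mem_univ _, by apply Fin.ext; simp⟩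
  · intro a _
    rfl

lemma cvar_diag_ne_zero (n : ℕ) (i : Fin (n - 1)) : cvar n i i ≠ 0 := by
  rw [cvar, dif_pos le_rfl, Ne, IsFractionRing.to_map_eq_zero_iff]
  exact MvPolynomial.X_ne_zero _

lemma compl_Iio_fin (n : ℕ) (j : Fin (n - 1)) :
    (Finset.Iio j)ᶜ = Finset.Ici j := by
  ext m
  simp [not_lt]

lemma key (n : ℕ) (j : Fin (n - 1)) :
    (-1 : CZField n) ^ (1 + (n - 1 - (j : ℕ)) * (n - (j : ℕ)) / 2) *
        Ej n (j : ℕ) j.isLt / ∏ m ∈ Finset.Ici j, cvar n m m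
      = ((Amat n).updateCol j (fun m => zvar n m)).det / (Amat n).det := by
  have hj := j.isLt
  have hn_j : n - (j : ℕ) = (n - 1 - (j : ℕ)) + 1 := by omega
  set N := n - 1 - (j : ℕ) with hNdef
  have hP1 : (∏ m ∈ Finset.Iio j, cvar n m m) ≠ 0 :=
    Finset.prod_ne_zero_iff.mpr fun i _ => cvar_diag_ne_zero n i
  have hsplit : (∏ m : Fin (n - 1), cvar n m m)
      = (∏ m ∈ Finset.Iio j, cvar n m m) * ∏ m ∈ Finset.Ici j, cvar n m m := by
    rw [← Finset.prod_mul_prod_compl (Finset.Iio j), compl_Iio_fin]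
  rw [hn_j, det_updateCol, det_Amat, Ej_eq_Bmat n (j : ℕ) j.isLt, hsplit]
  rw [mul_div_mul_left _ _ hP1]
  have htri : N * (N + 1) / 2 = N * (N - 1) / 2 + N := by
    rw [mul_comm N (N + 1)]; exact tri_succ N
  have hN1 : 1 ≤ N := by omega
  have hsign : (-1 : CZField n) ^ (1 + N * (N + 1) / 2)
      * (-1 : CZField n) ^ ((N - 1) + N * (N - 1) / 2) = 1 := by
    rw [← pow_add]
    exact Even.neg_one_pow ⟨N * (N - 1) / 2 + N, by omega⟩
  rw [← mul_assoc, hsign, one_mul]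


/-- `∑_{j=1}^{n−1} s_j = ∑_{j=1}^{n−1} z_j`, where
`s_j = (−1)^{1+(n−j)(n−j+1)/2} · c_j · E_j / ∏_{m=j}^{n−1} c_{m,m}`
(here the index `j` of the sum is 0-based, corresponding to the 1-based `j+1`). -/
theorem sum_sj_eq_sum_z (n : ℕ) (hn : 2 ≤ n) :
    ∑ j : Fin (n - 1),
      (-1 : CZField n) ^ (1 + (n - 1 - (j : ℕ)) * (n - (j : ℕ)) / 2) *
        csum n j * Ej n (j : ℕ) j.isLt /
        ∏ m ∈ Finset.Ici j, cvar n m m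
      = ∑ j : Fin (n - 1), zvar n j := by
  have hdetA : (Amat n).det ≠ 0 := by
    rw [det_Amat]
    exact Finset.prod_ne_zero_iff.mpr fun i _ => cvar_diag_ne_zero n i
  have step1 : ∀ j : Fin (n - 1),
      (-1 : CZField n) ^ (1 + (n - 1 - (j : ℕ)) * (n - (j : ℕ)) / 2) *
        csum n j * Ej n (j : ℕ) j.isLt / ∏ m ∈ Finset.Ici j, cvar n m m
      = csum n j *
          (((Amat n).updateCol j (fun m => zvar n m)).det / (Amat n).det) := by
    intro j
    rw [← key n j]
    ring
  rw [Finset.sum_congr rfl fun j _ => step1 j]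
  have hcsum : ∀ j : Fin (n - 1), csum n j = ∑ m : Fin (n - 1), Amat n m j := by
    intro j
    rw [csum]
    refine Finset.sum_subset (Finset.subset_univ _) ?_
    intro m _ hm
    exact dif_neg fun h => hm (Finset.mem_Iic.mpr h)
  have hrow : ∀ m : Fin (n - 1),
      ∑ j : Fin (n - 1), Amat n m j *
          (((Amat n).updateCol j (fun k => zvar n k)).det / (Amat n).det)
        = zvar n m := by
    intro m
    have h2 := congrFun (Matrix.mulVec_cramer (Amat n) fun k => zvar n k) m
    simp only [Matrix.mulVec, dotProduct, Matrix.cramer_apply, Pi.smul_apply,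
      smul_eq_mul] at h2
    calc ∑ j : Fin (n - 1), Amat n m j *
            (((Amat n).updateCol j (fun k => zvar n k)).det / (Amat n).det)
        = (∑ j : Fin (n - 1),
            Amat n m j * ((Amat n).updateCol j (fun k => zvar n k)).det)
            / (Amat n).det := by
          rw [Finset.sum_div]
          exact Finset.sum_congr rfl fun j _ => (mul_div_assoc _ _ _).symm
      _ = ((Amat n).det * zvar n m) / (Amat n).det := by rw [h2]
      _ = zvar n m := mul_div_cancel_left₀ _ hdetA
  calc ∑ j : Fin (n - 1), csum n j *
          (((Amat n).updateCol j (fun m => zvar n m)).det / (Amat n).det)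
      = ∑ j : Fin (n - 1), ∑ m : Fin (n - 1), Amat n m j *
          (((Amat n).updateCol j (fun k => zvar n k)).det / (Amat n).det) := by
        refine Finset.sum_congr rfl fun j _ => ?_
        rw [hcsum j, Finset.sum_mul]
    _ = ∑ m : Fin (n - 1), ∑ j : Fin (n - 1), Amat n m j *
          (((Amat n).updateCol j (fun k => zvar n k)).det / (Amat n).det) :=
        Finset.sum_comm
    _ = ∑ j : Fin (n - 1), zvar n j := Finset.sum_congr rfl fun m _ => hrow m
end

section
/- For every s ∈ ℂ with 0 < Re s < 1, the limit as T → ∞ of ∫_{−T}^{T} e^{2πix} |x|^{s−1} dx exists and equals 2 · (2π)^{−s} · Γ(s) · cos(πs/2). -/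
open Filter

section helpers
open MeasureTheory Set Complex Topology


lemma rpow_exp_integrable {σ b : ℝ} (hσ : -1 < σ) (hb : 0 < b) :
    IntegrableOn (fun x : ℝ => x ^ σ * Real.exp (-b * x)) (Ioi 0) := by
  have := integrableOn_rpow_mul_exp_neg_mul_rpow hσ zero_lt_one hb
  refine this.congr_fun (fun x hx => ?_) measurableSet_Ioi
  simp only [Real.rpow_one]

lemma contOn_cpow (s : ℂ) : ContinuousOn (fun x : ℝ => (x:ℂ) ^ (s-1)) (Ioi 0) :=
  fun x hx => (continuousAt_ofReal_cpow_const x (s-1) (Or.inr (ne_of_gt hx))).continuousWithinAt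

lemma integrable_aux {s : ℂ} (hs : 0 < s.re) {r : ℂ} (hr : 0 < r.re) :
    IntegrableOn (fun x : ℝ => (x:ℂ) ^ (s-1) * Complex.exp (-(r * x))) (Ioi 0) := by
  refine Integrable.mono' (rpow_exp_integrable (by linarith : (-1:ℝ) < s.re - 1) hr)
    (((contOn_cpow s).mul ((Complex.continuous_exp.comp
      (by continuity : Continuous fun x : ℝ => -(r * (x:ℂ)))).continuousOn)).aestronglyMeasurable
      measurableSet_Ioi) ?_
  filter_upwards [ae_restrict_mem measurableSet_Ioi] with x hx
  rw [norm_mul, norm_cpow_eq_rpow_re_of_pos hx, Complex.norm_exp]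
  simp only [sub_re, one_re]
  have : (-(r * (x:ℂ))).re = -r.re * x := by simp [mul_comm]
  rw [this]

lemma gamma_rotate {s : ℂ} (hs : 0 < s.re) :
    ∀ r : ℂ, 0 < r.re →
      ∫ x in Ioi (0:ℝ), (x:ℂ) ^ (s-1) * Complex.exp (-(r*x)) = r ^ (-s) * Complex.Gamma s := by
  set U : Set ℂ := {c | 0 < c.re} with hU
  have hUopen : IsOpen U := isOpen_lt continuous_const Complex.continuous_re
  set f : ℂ → ℂ := fun r => ∫ x in Ioi (0:ℝ), (x:ℂ) ^ (s-1) * Complex.exp (-(r*x)) with hf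
  set g : ℂ → ℂ := fun r => r ^ (-s) * Complex.Gamma s with hg
  have meas : ∀ r : ℂ, AEStronglyMeasurable (fun x : ℝ => (x:ℂ) ^ (s-1) * Complex.exp (-(r*x)))
      (volume.restrict (Ioi 0)) := fun r =>
    ((contOn_cpow s).mul ((Complex.continuous_exp.comp
      (by continuity : Continuous fun x : ℝ => -(r * (x:ℂ)))).continuousOn)).aestronglyMeasurable
      measurableSet_Ioi
  have hfd : DifferentiableOn ℂ f U := by
    intro r₀ hr₀
    have hr₀' : 0 < r₀.re := hr₀
    have key := hasDerivAt_integral_of_dominated_loc_of_deriv_le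
      (F := fun (r : ℂ) (x : ℝ) => (x:ℂ) ^ (s-1) * Complex.exp (-(r*x)))
      (F' := fun (r : ℂ) (x : ℝ) => (x:ℂ) ^ (s-1) * (Complex.exp (-(r*x)) * -(x:ℂ)))
      (μ := volume.restrict (Ioi 0)) (x₀ := r₀)
      (bound := fun x : ℝ => x ^ s.re * Real.exp (-(r₀.re/2) * x))
      (Metric.ball_mem_nhds r₀ (by positivity : (0:ℝ) < r₀.re/2))
      (Eventually.of_forall meas) (integrable_aux hs hr₀')
      ?_ ?_ ?_ ?_
    · exact key.2.differentiableAt.differentiableWithinAt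
    · exact (((contOn_cpow s).mul (((Complex.continuous_exp.comp
        (by continuity : Continuous fun x : ℝ => -(r₀ * (x:ℂ)))).mul
        (by continuity : Continuous fun x : ℝ => -(x:ℂ))).continuousOn)).aestronglyMeasurable
        measurableSet_Ioi)
    · filter_upwards [ae_restrict_mem measurableSet_Ioi] with x hx r hr
      have hxpos : (0:ℝ) < x := hx
      have hrre : r₀.re/2 ≤ r.re := by
        have h2 : |r.re - r₀.re| < r₀.re/2 := by
          calc |r.re - r₀.re| = |(r - r₀).re| := by rw [Complex.sub_re]
            _ ≤ ‖r - r₀‖ := Complex.abs_re_le_norm _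
            _ < r₀.re/2 := by simpa [Complex.dist_eq] using hr
        linarith [(abs_lt.mp h2).1]
      rw [norm_mul, norm_mul, norm_neg, norm_cpow_eq_rpow_re_of_pos hxpos, Complex.norm_exp,
        Complex.norm_real, Real.norm_eq_abs, abs_of_pos hxpos]
      have hre : (-(r * (x:ℂ))).re = -r.re * x := by simp [mul_comm]
      rw [hre, sub_re, one_re]
      have h1 : x ^ (s.re - 1) * (Real.exp (-r.re * x) * x) = x ^ s.re * Real.exp (-r.re * x) := by
        rw [Real.rpow_sub hxpos, Real.rpow_one]; field_simp
      rw [h1]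
      gcongr
      all_goals first
        | exact Real.rpow_nonneg hxpos.le _
        | exact Real.exp_le_exp.mpr (by nlinarith)
        | nlinarith
    · exact rpow_exp_integrable (by linarith) (by positivity)
    · filter_upwards [ae_restrict_mem measurableSet_Ioi] with x hx r hr
      have h1 : HasDerivAt (fun r : ℂ => -(r * (x:ℂ))) (-(x:ℂ)) r := by
        have := ((hasDerivAt_id' r).mul_const (x:ℂ)).neg; rwa [one_mul] at this
      exact (h1.cexp).const_mul _
  have hgd : DifferentiableOn ℂ g U := by
    intro r hr
    refine DifferentiableAt.differentiableWithinAt ?_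
    exact (((hasDerivAt_id r).cpow_const (Or.inl hr)).differentiableAt.mul_const _)
  have hpre : IsPreconnected U := (convex_halfSpace_re_gt 0).isPreconnected
  have h1U : (1:ℂ) ∈ U := by simp [hU]
  have hfreq : ∃ᶠ z in 𝓝[≠] (1:ℂ), f z = g z := by
    have heq : ∀ t : ℝ, 0 < t → f t = g t := by
      intro t ht
      have := Complex.integral_cpow_mul_exp_neg_mul_Ioi hs ht
      rw [hf, hg]
      simp only
      have hc : ∀ x : ℝ, -((t:ℂ) * x) = -((t:ℝ) * x : ℝ) := by intro x; push_cast; ring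
      calc (∫ x in Ioi (0:ℝ), (x:ℂ) ^ (s-1) * Complex.exp (-((t:ℂ)*x)))
          = (1/(t:ℂ)) ^ s * Complex.Gamma s := this
        _ = (t:ℂ) ^ (-s) * Complex.Gamma s := by
            rw [one_div, Complex.inv_cpow _ _ (by
              rw [Complex.arg_ofReal_of_nonneg ht.le]
              exact Real.pi_ne_zero.symm), ← Complex.cpow_neg]
    have hu : Tendsto (fun n : ℕ => ((1 + ((n:ℝ)+1)⁻¹ : ℝ) : ℂ)) atTop (𝓝[≠] (1:ℂ)) := by
      rw [tendsto_nhdsWithin_iff]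
      constructor
      · have h : Tendsto (fun n : ℕ => (1 + ((n:ℝ)+1)⁻¹ : ℝ)) atTop (𝓝 (1 + 0)) := by
          exact tendsto_const_nhds.add ((tendsto_one_div_add_atTop_nhds_zero_nat (𝕜 := ℝ)).congr
            (fun n => by rw [one_div]) |>.comp tendsto_id) |>.congr (fun n => rfl)
        rw [add_zero] at h
        exact (Complex.continuous_ofReal.continuousAt.tendsto.comp h)
      · refine Eventually.of_forall (fun n => ?_)
        simp only [mem_compl_iff, mem_singleton_iff]
        intro hcon
        have : (1 + ((n:ℝ)+1)⁻¹ : ℝ) = 1 := by exact_mod_cast hcon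
        have : ((n:ℝ)+1)⁻¹ = 0 := by linarith
        simp at this
        linarith [this]
    exact hu.frequently (Eventually.of_forall (fun n => heq _ (by positivity))).frequently
  exact fun r hr => (hfd.analyticOnNhd hUopen).eqOn_of_preconnected_of_frequently_eq
    (hgd.analyticOnNhd hUopen) hpre h1U hfreq hr

noncomputable def Ec (s c : ℂ) : ℂ :=
  (∫ x in (0:ℝ)..1, Complex.exp (c*x) * (x:ℂ) ^ (s-1))
    + (0 - Complex.exp (c*(1:ℝ)) * ((1:ℝ):ℂ) ^ (s-1) / c)
    - (s-1)/c * ∫ x in Ioi (1:ℝ), Complex.exp (c*x) * (x:ℂ) ^ (s-2)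

lemma intInt_cexp_cpow {s c : ℂ} (hs : 0 < s.re) (hc : c.re ≤ 0) {a b : ℝ}
    (ha : 0 ≤ a) (hb : 0 ≤ b) :
    IntervalIntegrable (fun x : ℝ => Complex.exp (c*x) * (x:ℂ) ^ (s-1)) volume a b := by
  have key : ∀ T : ℝ, 0 ≤ T → IntervalIntegrable
      (fun x : ℝ => Complex.exp (c*x) * (x:ℂ) ^ (s-1)) volume 0 T := by
    intro T hT
    rw [intervalIntegrable_iff_integrableOn_Ioc_of_le hT]
    have hmeas : AEStronglyMeasurable (fun x : ℝ => Complex.exp (c*x) * (x:ℂ) ^ (s-1))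
        (volume.restrict (Ioc 0 T)) := by
      refine ContinuousOn.aestronglyMeasurable ?_ measurableSet_Ioc
      refine ((Complex.continuous_exp.comp (by continuity : Continuous fun x : ℝ =>
        c * (x:ℂ))).continuousOn).mul (fun x hx => ?_)
      exact (continuousAt_ofReal_cpow_const x (s-1) (Or.inr (ne_of_gt hx.1))).continuousWithinAt
    refine Integrable.mono' ((intervalIntegral.intervalIntegrable_rpow'
      (by linarith : (-1:ℝ) < s.re - 1) (a := 0) (b := T)).1) hmeas ?_
    filter_upwards [ae_restrict_mem measurableSet_Ioc] with x hx
    rw [norm_mul, Complex.norm_exp,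
      norm_cpow_eq_rpow_re_of_pos hx.1, sub_re, one_re]
    have : (c * (x:ℂ)).re = c.re * x := by simp
    rw [this]
    have h1 : Real.exp (c.re * x) ≤ 1 := by
      rw [Real.exp_le_one_iff]
      exact mul_nonpos_of_nonpos_of_nonneg hc hx.1.le
    nlinarith [Real.rpow_nonneg hx.1.le (s.re - 1)]
  have h1 := key a ha
  have h2 := key b hb
  exact h1.symm.trans h2

lemma integrableOn_tail {s c : ℂ} (hs1 : s.re < 1) (hc : c.re ≤ 0) :
    IntegrableOn (fun x : ℝ => Complex.exp (c*x) * (x:ℂ) ^ (s-2)) (Ioi 1) := by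
  have hmeas : AEStronglyMeasurable (fun x : ℝ => Complex.exp (c*x) * (x:ℂ) ^ (s-2))
      (volume.restrict (Ioi 1)) := by
    refine ContinuousOn.aestronglyMeasurable ?_ measurableSet_Ioi
    refine ((Complex.continuous_exp.comp (by continuity : Continuous fun x : ℝ =>
      c * (x:ℂ))).continuousOn).mul (fun x hx => ?_)
    exact (continuousAt_ofReal_cpow_const x (s-2)
      (Or.inr (ne_of_gt (lt_trans one_pos hx)))).continuousWithinAt
  refine Integrable.mono' (integrableOn_Ioi_rpow_of_lt (by linarith : s.re - 2 < -1) one_pos)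
    hmeas ?_
  filter_upwards [ae_restrict_mem measurableSet_Ioi] with x hx
  have hx0 : (0:ℝ) < x := lt_trans one_pos hx
  rw [norm_mul, Complex.norm_exp,
    norm_cpow_eq_rpow_re_of_pos hx0]
  have h2 : (s - 2).re = s.re - 2 := by simp
  have : (c * (x:ℂ)).re = c.re * x := by simp
  rw [this, h2]
  have h1 : Real.exp (c.re * x) ≤ 1 := by
    rw [Real.exp_le_one_iff]
    exact mul_nonpos_of_nonpos_of_nonneg hc hx0.le
  nlinarith [Real.rpow_nonneg hx0.le (s.re - 2)]

lemma tendsto_Ec {s c : ℂ} (hs0 : 0 < s.re) (hs1 : s.re < 1) (hc : c.re ≤ 0) (hc0 : c ≠ 0) :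
    Tendsto (fun T : ℝ => ∫ x in (0:ℝ)..T, Complex.exp (c*x) * (x:ℂ) ^ (s-1)) atTop
      (𝓝 (Ec s c)) := by
  have hs1' : s ≠ 1 := by
    intro h; rw [h] at hs1; norm_num at hs1
  have hsne : s - 1 ≠ 0 := sub_ne_zero.mpr hs1'
  have hIBP : ∀ T : ℝ, 1 ≤ T → (∫ x in (0:ℝ)..T, Complex.exp (c*x) * (x:ℂ) ^ (s-1))
      = (∫ x in (0:ℝ)..1, Complex.exp (c*x) * (x:ℂ) ^ (s-1))
        + (Complex.exp (c*T) * (T:ℂ) ^ (s-1) / c - Complex.exp (c*(1:ℝ)) * ((1:ℝ):ℂ) ^ (s-1) / c)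
        - (s-1)/c * ∫ x in (1:ℝ)..T, Complex.exp (c*x) * (x:ℂ) ^ (s-2) := by
    intro T hT
    have hT0 : (0:ℝ) ≤ T := by linarith
    -- interval integrability of the second integrand on [1,T]
    have hcont2 : ContinuousOn (fun x : ℝ => Complex.exp (c*x) * (x:ℂ) ^ (s-2)) (uIcc 1 T) := by
      refine ((Complex.continuous_exp.comp (by continuity : Continuous fun x : ℝ =>
        c * (x:ℂ))).continuousOn).mul (fun x hx => ?_)
      rw [uIcc_of_le hT] at hx
      exact (continuousAt_ofReal_cpow_const x (s-2)
        (Or.inr (by linarith [hx.1] : x ≠ 0))).continuousWithinAt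
    have hII2 : IntervalIntegrable (fun x : ℝ => Complex.exp (c*x) * (x:ℂ) ^ (s-2))
        volume 1 T := hcont2.intervalIntegrable
    have hII1 : IntervalIntegrable (fun x : ℝ => Complex.exp (c*x) * (x:ℂ) ^ (s-1))
        volume 1 T := intInt_cexp_cpow hs0 hc zero_le_one hT0
    -- FTC on [1,T]
    have hderiv : ∀ x ∈ uIcc (1:ℝ) T,
        HasDerivAt (fun y : ℝ => Complex.exp (c*y) * (y:ℂ) ^ (s-1) / c)
          (Complex.exp (c*x) * (x:ℂ) ^ (s-1) + (s-1)/c * (Complex.exp (c*x) * (x:ℂ) ^ (s-2)))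
          x := by
      intro x hx
      rw [uIcc_of_le hT] at hx
      have hx0 : (0:ℝ) < x := by linarith [hx.1]
      have hexp : HasDerivAt (fun y : ℝ => Complex.exp (c*y)) (c * Complex.exp (c*x)) x := by
        have h := (((hasDerivAt_id (x:ℂ)).const_mul c).cexp).comp_ofReal
        simpa [mul_comm] using h
      have hpow : HasDerivAt (fun y : ℝ => (y:ℂ) ^ (s-1)) ((s-1) * (x:ℂ) ^ (s-2)) x := by
        have hne : s - 2 ≠ -1 := by
          intro h
          apply hs1'
          linear_combination h + (2:ℂ) - 1 - -1
        have h := (hasDerivAt_ofReal_cpow_const' (ne_of_gt hx0) hne).const_mul (s-1)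
        have heq : (fun y : ℝ => (s-1) * ((y:ℂ) ^ (s-2+1) / (s-2+1))) =
            (fun y : ℝ => (y:ℂ) ^ (s-1)) := by
          funext y
          rw [show s - 2 + 1 = s - 1 by ring, mul_comm, div_mul_cancel₀ _ hsne]
        rw [heq] at h
        simpa [show s - 2 + 1 = s - 1 by ring] using h
      have h := (hexp.mul hpow).div_const c
      refine h.congr_deriv ?_
      field_simp
    have hFTC := intervalIntegral.integral_eq_sub_of_hasDerivAt hderiv
      (hII1.add (hII2.const_mul ((s-1)/c)))
    rw [intervalIntegral.integral_add hII1 (hII2.const_mul ((s-1)/c)),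
      intervalIntegral.integral_const_mul] at hFTC
    have hsplit := intervalIntegral.integral_add_adjacent_intervals
      (f := fun x : ℝ => Complex.exp (c*x) * (x:ℂ) ^ (s-1)) (μ := volume)
      (intInt_cexp_cpow hs0 hc le_rfl zero_le_one) hII1
    rw [← hsplit]
    have h2 : (∫ x in (1:ℝ)..T, Complex.exp (c*x) * (x:ℂ) ^ (s-1))
        = Complex.exp (c*T) * (T:ℂ) ^ (s-1) / c - Complex.exp (c*(1:ℝ)) * ((1:ℝ):ℂ) ^ (s-1) / c
          - (s-1)/c * ∫ x in (1:ℝ)..T, Complex.exp (c*x) * (x:ℂ) ^ (s-2) := by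
      linear_combination hFTC
    rw [h2]
    ring
  -- now the limit
  have hbdry : Tendsto (fun T : ℝ => Complex.exp (c*T) * (T:ℂ) ^ (s-1) / c) atTop (𝓝 0) := by
    refine squeeze_zero_norm' (a := fun T : ℝ => T ^ (s.re - 1) / ‖c‖) ?_ ?_
    · filter_upwards [eventually_gt_atTop (0:ℝ)] with T hT
      rw [norm_div, norm_mul,
        Complex.norm_exp, norm_cpow_eq_rpow_re_of_pos hT, sub_re, one_re]
      have : (c * (T:ℂ)).re = c.re * T := by simp
      rw [this]
      have h1 : Real.exp (c.re * T) ≤ 1 := by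
        rw [Real.exp_le_one_iff]
        exact mul_nonpos_of_nonpos_of_nonneg hc hT.le
      have h2 : (0:ℝ) < ‖c‖ := by
        simpa using norm_pos_iff.mpr hc0
      rw [div_le_div_iff₀ h2 h2]
      have h3 := mul_le_mul_of_nonneg_right (mul_le_mul_of_nonneg_right h1
        (Real.rpow_nonneg hT.le (s.re - 1))) h2.le
      linarith
    · have h := (tendsto_rpow_neg_atTop (by linarith : (0:ℝ) < 1 - s.re)).div_const
        ‖c‖
      simp only [zero_div] at h
      refine h.congr (fun T => ?_)
      rw [show -(1 - s.re) = s.re - 1 by ring]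
  have htail : Tendsto (fun T : ℝ => ∫ x in (1:ℝ)..T, Complex.exp (c*x) * (x:ℂ) ^ (s-2)) atTop
      (𝓝 (∫ x in Ioi (1:ℝ), Complex.exp (c*x) * (x:ℂ) ^ (s-2))) :=
    intervalIntegral_tendsto_integral_Ioi 1 (integrableOn_tail hs1 hc) tendsto_id
  have hG : Tendsto (fun T : ℝ =>
      (∫ x in (0:ℝ)..1, Complex.exp (c*x) * (x:ℂ) ^ (s-1))
        + (Complex.exp (c*T) * (T:ℂ) ^ (s-1) / c - Complex.exp (c*(1:ℝ)) * ((1:ℝ):ℂ) ^ (s-1) / c)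
        - (s-1)/c * ∫ x in (1:ℝ)..T, Complex.exp (c*x) * (x:ℂ) ^ (s-2)) atTop (𝓝 (Ec s c)) := by
    exact (tendsto_const_nhds.add (hbdry.sub tendsto_const_nhds)).sub
      (htail.const_mul ((s-1)/c))
  refine Tendsto.congr' ?_ hG
  filter_upwards [eventually_ge_atTop (1:ℝ)] with T hT
  exact (hIBP T hT).symm

lemma Ec_value {s c : ℂ} (hs0 : 0 < s.re) (hs1 : s.re < 1) (hcre : c.re = 0) (hc0 : c ≠ 0) :
    Ec s c = (-c) ^ (-s) * Complex.Gamma s := by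
  have hcim : c.im ≠ 0 := by
    intro h
    exact hc0 (Complex.ext hcre h)
  -- value for shifted c
  have hval : ∀ ε : ℝ, 0 < ε → Ec s (c - ε) = ((ε:ℂ) - c) ^ (-s) * Complex.Gamma s := by
    intro ε hε
    have hre : (c - (ε:ℂ)).re ≤ 0 := by simp [hcre, hε.le]
    have hne : c - (ε:ℂ) ≠ 0 := by
      intro h
      apply hcim
      have := congrArg Complex.im h
      simpa using this
    have h1 := tendsto_Ec hs0 hs1 hre hne
    have hint : IntegrableOn (fun x : ℝ => Complex.exp ((c - ε)*x) * (x:ℂ) ^ (s-1)) (Ioi 0) := by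
      have := integrable_aux hs0 (r := (ε:ℂ) - c) (by simp [hcre, hε])
      refine this.congr_fun (fun x hx => ?_) measurableSet_Ioi
      rw [mul_comm]
      congr 1
      congr 1
      ring
    have h2 := intervalIntegral_tendsto_integral_Ioi 0 hint tendsto_id
    have h3 : (∫ x in Ioi (0:ℝ), Complex.exp ((c - ε)*x) * (x:ℂ) ^ (s-1))
        = ((ε:ℂ) - c) ^ (-s) * Complex.Gamma s := by
      rw [← gamma_rotate hs0 ((ε:ℂ) - c) (by simp [hcre, hε])]
      refine setIntegral_congr_fun measurableSet_Ioi (fun x hx => ?_)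
      rw [mul_comm]
      congr 1
      ring_nf
    rw [← h3]
    exact tendsto_nhds_unique h1 h2
  -- continuity of Ec in ε
  have hbase : Tendsto (fun ε : ℝ => c - (ε:ℂ)) (𝓝[>] (0:ℝ)) (𝓝 c) := by
    have : Tendsto (fun ε : ℝ => c - (ε:ℂ)) (𝓝 (0:ℝ)) (𝓝 (c - ((0:ℝ):ℂ))) :=
      tendsto_const_nhds.sub (Complex.continuous_ofReal.tendsto 0)
    simpa using this.mono_left nhdsWithin_le_nhds
  have hcont : Tendsto (fun ε : ℝ => Ec s (c - ε)) (𝓝[>] (0:ℝ)) (𝓝 (Ec s c)) := by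
    unfold Ec
    refine Tendsto.sub (Tendsto.add ?_ ?_) (Tendsto.mul ?_ ?_)
    · -- integral over (0,1]
      simp_rw [intervalIntegral.integral_of_le zero_le_one]
      refine tendsto_integral_filter_of_dominated_convergence
        (fun x : ℝ => x ^ (s.re - 1)) ?_ ?_ ?_ ?_
      · refine Eventually.of_forall (fun ε => ?_)
        refine ContinuousOn.aestronglyMeasurable ?_ measurableSet_Ioc
        refine ((Complex.continuous_exp.comp (by continuity : Continuous fun x : ℝ =>
          (c - ε) * (x:ℂ))).continuousOn).mul (fun x hx => ?_)
        exact (continuousAt_ofReal_cpow_const x (s-1) (Or.inr (ne_of_gt hx.1))).continuousWithinAt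
      · filter_upwards [self_mem_nhdsWithin] with ε (hε : (0:ℝ) < ε)
        filter_upwards [ae_restrict_mem measurableSet_Ioc] with x hx
        rw [norm_mul, Complex.norm_exp,
          norm_cpow_eq_rpow_re_of_pos hx.1, sub_re, one_re]
        have hre : ((c - (ε:ℂ)) * (x:ℂ)).re = -ε * x := by simp [hcre]
        rw [hre]
        have h1 : Real.exp (-ε * x) ≤ 1 := by
          rw [Real.exp_le_one_iff]
          nlinarith [hx.1]
        nlinarith [Real.rpow_nonneg hx.1.le (s.re - 1)]
      · exact (intervalIntegral.intervalIntegrable_rpow'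
          (by linarith : (-1:ℝ) < s.re - 1) (a := 0) (b := 1)).1
      · refine Eventually.of_forall (fun x => ?_)
        refine Tendsto.mul ?_ tendsto_const_nhds
        exact (Complex.continuous_exp.tendsto _).comp ((hbase.mul_const _).congr (fun ε => rfl))
    · -- middle boundary term
      refine Tendsto.sub tendsto_const_nhds ?_
      refine Tendsto.div (Tendsto.mul ?_ tendsto_const_nhds) hbase hc0
      exact (Complex.continuous_exp.tendsto _).comp (hbase.mul_const _)
    · exact (tendsto_const_nhds.div hbase hc0)
    · -- tail integral over Ioi 1
      refine tendsto_integral_filter_of_dominated_convergence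
        (fun x : ℝ => x ^ (s.re - 2)) ?_ ?_ ?_ ?_
      · refine Eventually.of_forall (fun ε => ?_)
        refine ContinuousOn.aestronglyMeasurable ?_ measurableSet_Ioi
        refine ((Complex.continuous_exp.comp (by continuity : Continuous fun x : ℝ =>
          (c - ε) * (x:ℂ))).continuousOn).mul (fun x hx => ?_)
        exact (continuousAt_ofReal_cpow_const x (s-2)
          (Or.inr (by linarith [mem_Ioi.mp hx] : x ≠ 0))).continuousWithinAt
      · filter_upwards [self_mem_nhdsWithin] with ε (hε : (0:ℝ) < ε)
        filter_upwards [ae_restrict_mem measurableSet_Ioi] with x hx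
        have hx0 : (0:ℝ) < x := lt_trans one_pos hx
        rw [norm_mul, Complex.norm_exp,
          norm_cpow_eq_rpow_re_of_pos hx0]
        have h2 : (s - 2).re = s.re - 2 := by simp
        have hre : ((c - (ε:ℂ)) * (x:ℂ)).re = -ε * x := by simp [hcre]
        rw [hre, h2]
        have h1 : Real.exp (-ε * x) ≤ 1 := by
          rw [Real.exp_le_one_iff]
          nlinarith
        nlinarith [Real.rpow_nonneg hx0.le (s.re - 2)]
      · exact integrableOn_Ioi_rpow_of_lt (by linarith : s.re - 2 < -1) one_pos
      · refine Eventually.of_forall (fun x => ?_)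
        refine Tendsto.mul ?_ tendsto_const_nhds
        exact (Complex.continuous_exp.tendsto _).comp (hbase.mul_const _)
  -- limit of values
  have hvals : Tendsto (fun ε : ℝ => ((ε:ℂ) - c) ^ (-s) * Complex.Gamma s) (𝓝[>] (0:ℝ))
      (𝓝 ((-c) ^ (-s) * Complex.Gamma s)) := by
    refine Tendsto.mul_const _ ?_
    have hb2 : Tendsto (fun ε : ℝ => (ε:ℂ) - c) (𝓝[>] (0:ℝ)) (𝓝 (-c)) := by
      have : Tendsto (fun ε : ℝ => (ε:ℂ) - c) (𝓝 (0:ℝ)) (𝓝 (((0:ℝ):ℂ) - c)) :=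
        (Complex.continuous_ofReal.tendsto 0).sub tendsto_const_nhds
      simpa using this.mono_left nhdsWithin_le_nhds
    exact (continuousAt_cpow_const (Or.inr (by simpa using hcim))).tendsto.comp hb2
  have heq : (fun ε : ℝ => Ec s (c - ε)) =ᶠ[𝓝[>] (0:ℝ)]
      (fun ε : ℝ => ((ε:ℂ) - c) ^ (-s) * Complex.Gamma s) := by
    filter_upwards [self_mem_nhdsWithin] with ε (hε : (0:ℝ) < ε)
    exact hval ε hε
  exact tendsto_nhds_unique (hcont.congr' heq) hvals

lemma key_tendsto {s c : ℂ} (hs0 : 0 < s.re) (hs1 : s.re < 1) (hcre : c.re = 0) (hc0 : c ≠ 0) :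
    Tendsto (fun T : ℝ => ∫ x in (0:ℝ)..T, Complex.exp (c*x) * (x:ℂ) ^ (s-1)) atTop
      (𝓝 ((-c) ^ (-s) * Complex.Gamma s)) := by
  rw [← Ec_value hs0 hs1 hcre hc0]
  exact tendsto_Ec hs0 hs1 (le_of_eq hcre) hc0


end helpers

open MeasureTheory Set Complex Topology in
/-- For every `s ∈ ℂ` with `0 < Re s < 1`, the limit as `T → ∞` of
`∫_{−T}^{T} e^{2πix} |x|^{s−1} dx` exists and equals `2 (2π)^{−s} Γ(s) cos(πs/2)`. -/
theorem exterior_square_G0_integral (s : ℂ) (h0 : 0 < s.re) (h1 : s.re < 1) :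
    Tendsto
      (fun T : ℝ => ∫ x in (-T)..T,
        Complex.exp (2 * Real.pi * Complex.I * x) * ((|x| : ℝ) : ℂ) ^ (s - 1))
      atTop
      (nhds (2 * (2 * (Real.pi : ℂ)) ^ (-s) * Complex.Gamma s *
        Complex.cos ((Real.pi : ℂ) * s / 2))) := by
  have hπ : (0:ℝ) < Real.pi := Real.pi_pos
  have h2π : (0:ℝ) < 2 * Real.pi := by linarith
  set cp : ℂ := 2 * (Real.pi:ℂ) * Complex.I with hcp
  set cm : ℂ := -(2 * (Real.pi:ℂ) * Complex.I) with hcm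
  have hcpne : cp ≠ 0 := by
    simp only [hcp]
    intro h
    rcases mul_eq_zero.mp h with h' | h'
    · rcases mul_eq_zero.mp h' with h'' | h''
      · norm_num at h''
      · exact Real.pi_ne_zero (by exact_mod_cast h'')
    · exact Complex.I_ne_zero h'
  have hcmne : cm ≠ 0 := by exact fun h => hcpne (by rw [hcm] at h; exact neg_eq_zero.mp h)
  have hcpre : cp.re = 0 := by simp [hcp]
  have hcmre : cm.re = 0 := by rw [hcm]; simp [hcpre]
  have hp := key_tendsto h0 h1 hcpre hcpne
  have hm := key_tendsto h0 h1 hcmre hcmne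
  have hsum := hm.add hp
  -- identify the eventual equality
  have heq : (fun T : ℝ =>
      (∫ x in (0:ℝ)..T, Complex.exp (cm*x) * (x:ℂ) ^ (s-1))
        + (∫ x in (0:ℝ)..T, Complex.exp (cp*x) * (x:ℂ) ^ (s-1)))
      =ᶠ[atTop] (fun T : ℝ => ∫ x in (-T)..T,
          Complex.exp (2 * Real.pi * Complex.I * x) * ((|x| : ℝ) : ℂ) ^ (s - 1)) := by
    filter_upwards [eventually_ge_atTop (0:ℝ)] with T hT
    set f : ℝ → ℂ := fun x =>
      Complex.exp (2 * Real.pi * Complex.I * x) * ((|x| : ℝ) : ℂ) ^ (s - 1) with hf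
    have hIIp : IntervalIntegrable f volume 0 T := by
      rw [intervalIntegrable_iff_integrableOn_Ioc_of_le hT]
      refine ((intInt_cexp_cpow h0 (le_of_eq hcpre) le_rfl hT).1).congr_fun
        (fun x hx => ?_) measurableSet_Ioc
      simp only [hf, hcp, _root_.abs_of_pos hx.1]
    have hIIm : IntervalIntegrable f volume (-T) 0 := by
      have h1 : IntervalIntegrable (fun x => f (-x)) volume 0 T := by
        rw [intervalIntegrable_iff_integrableOn_Ioc_of_le hT]
        refine ((intInt_cexp_cpow h0 (le_of_eq hcmre) le_rfl hT).1).congr_fun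
          (fun x hx => ?_) measurableSet_Ioc
        simp only [hf]
        push_cast
        rw [abs_neg, _root_.abs_of_pos hx.1]
        congr 2
        rw [hcm]
        ring
      have h2 := (IntervalIntegrable.iff_comp_neg (f := fun x => f (-x)) (a := 0) (b := T)).mp h1
      simp only [neg_neg, neg_zero] at h2
      exact h2.symm
    rw [← intervalIntegral.integral_add_adjacent_intervals hIIm hIIp]
    congr 1
    · have hcn := intervalIntegral.integral_comp_neg (a := 0) (b := T) f
      rw [neg_zero] at hcn
      rw [← hcn]
      refine intervalIntegral.integral_congr (fun x hx => ?_)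
      rw [uIcc_of_le hT] at hx
      simp only [hf]
      push_cast
      rw [abs_neg, _root_.abs_of_nonneg hx.1]
      congr 2
      rw [hcm]
      ring
    · refine intervalIntegral.integral_congr (fun x hx => ?_)
      rw [uIcc_of_le hT] at hx
      simp only [hf, hcp, _root_.abs_of_nonneg hx.1]
  -- compute the limit value
  have h2πne : (2*(Real.pi:ℂ)) ≠ 0 := by
    intro h
    rcases mul_eq_zero.mp h with h' | h'
    · norm_num at h'
    · exact Real.pi_ne_zero (by exact_mod_cast h')
  have hlog2π : Complex.log (2*(Real.pi:ℂ)) = ((Real.log (2*Real.pi) : ℝ) : ℂ) := by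
    rw [show (2*(Real.pi:ℂ)) = ((2*Real.pi:ℝ):ℂ) by push_cast; ring,
      ← Complex.ofReal_log h2π.le]
  have hlogp : Complex.log cp = ((Real.log (2*Real.pi) : ℝ) : ℂ) + (Real.pi:ℂ)/2 * Complex.I := by
    rw [show cp = ((2*Real.pi:ℝ):ℂ) * Complex.I by rw [hcp]; push_cast; ring,
      Complex.log_ofReal_mul h2π Complex.I_ne_zero, Complex.log_I]
  have hlogm : Complex.log (-cp)
      = ((Real.log (2*Real.pi) : ℝ) : ℂ) + -((Real.pi:ℂ)/2) * Complex.I := by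
    rw [show -cp = ((2*Real.pi:ℝ):ℂ) * (-Complex.I) by rw [hcp]; push_cast; ring,
      Complex.log_ofReal_mul h2π (neg_ne_zero.mpr Complex.I_ne_zero), Complex.log_neg_I]
  have hval : (-cm) ^ (-s) * Complex.Gamma s + (-cp) ^ (-s) * Complex.Gamma s
      = 2 * (2 * (Real.pi : ℂ)) ^ (-s) * Complex.Gamma s
        * Complex.cos ((Real.pi : ℂ) * s / 2) := by
    rw [show -cm = cp by rw [hcm, neg_neg]]
    rw [Complex.cpow_def_of_ne_zero hcpne, Complex.cpow_def_of_ne_zero (neg_ne_zero.mpr hcpne),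
      Complex.cpow_def_of_ne_zero h2πne, hlogp, hlogm, hlog2π, Complex.cos]
    rw [show (((Real.log (2*Real.pi) : ℝ) : ℂ) + (Real.pi:ℂ)/2 * Complex.I) * (-s)
        = ((Real.log (2*Real.pi) : ℝ) : ℂ) * (-s) + -((Real.pi:ℂ) * s / 2) * Complex.I by ring]
    rw [show (((Real.log (2*Real.pi) : ℝ) : ℂ) + -((Real.pi:ℂ)/2) * Complex.I) * (-s)
        = ((Real.log (2*Real.pi) : ℝ) : ℂ) * (-s) + (Real.pi:ℂ) * s / 2 * Complex.I by ring]
    rw [Complex.exp_add, Complex.exp_add]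
    ring
  have := Tendsto.congr' heq hsum
  rwa [hval] at this
end
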